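/- arXiv:2302.08557 — 3 statements merged into one kernel-verified Lean document; each statement's English description precedes it below -/
import Mathlib

section
/- For every integer d ≥ 1 and every finite tree T with ℓ leaves, the d-dimensional discrepancy of the family of all subtrees of T satisfies D^d(T,𝒯) ≥ ℓ / (d · B(d/2, 1/2)), where B denotes the Beta function; that is, for every colouring f : E(T) → S^d there exists a subtree S of T with ‖Σ_{e∈E(S)} f(e)‖ ≥ ℓ / (d · B(d/2, 1/2)). -/
open SimpleGraph

/-- The real Beta function, `B(a, b) = Γ(a)Γ(b)/Γ(a+b)`. -/
noncomputable def realBeta (a b : ℝ) : ℝ :=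
  Real.Gamma a * Real.Gamma b / Real.Gamma (a + b)

open scoped RealInnerProductSpace ENNReal

namespace SphereAvg

open MeasureTheory Metric Real Set


/-- integral against `volumeIoiPow` is integral with a power weight. -/
lemma integral_volumeIoiPow (n : ℕ) (f : ℝ → ℝ) :
    (∫ r : Set.Ioi (0:ℝ), f r ∂(MeasureTheory.Measure.volumeIoiPow n))
      = ∫ r in Set.Ioi (0:ℝ), r ^ n * f r := by
  simp only [Measure.volumeIoiPow, ENNReal.ofReal]
  rw [integral_withDensity_eq_integral_smul ((measurable_subtype_coe.pow_const _).real_toNNReal),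
    integral_subtype_comap measurableSet_Ioi (fun a => Real.toNNReal (a ^ n) • f a)]
  refine setIntegral_congr_fun measurableSet_Ioi fun x hx => ?_
  rw [NNReal.smul_def, Real.coe_toNNReal _ (pow_nonneg hx.out.le _), smul_eq_mul]

lemma integral_Ioi_pow_exp (k : ℕ) :
    ∫ r in Set.Ioi (0:ℝ), r ^ k * Real.exp (-r^2) = (1/2) * Real.Gamma (((k:ℝ)+1)/2) := by
  have h := integral_rpow_mul_exp_neg_rpow (p := 2) (q := (k:ℝ)) two_pos
    (by have : (0:ℝ) ≤ (k:ℝ) := Nat.cast_nonneg k; linarith)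
  rw [← h]
  refine setIntegral_congr_fun measurableSet_Ioi fun x hx => ?_
  rw [show ((2:ℝ)) = ((2:ℕ):ℝ) by norm_num, Real.rpow_natCast, Real.rpow_natCast]

lemma integral_abs_mul_exp : ∫ t : ℝ, |t| * Real.exp (-t^2) = 1 := by
  have h : (fun t : ℝ => |t| * Real.exp (-t^2)) = fun t => |t| * Real.exp (-|t|^2) := by
    funext t; rw [sq_abs]
  rw [h, integral_comp_abs (f := fun t => t * Real.exp (-t^2))]
  have h2 := integral_Ioi_pow_exp 1
  simp only [pow_one] at h2
  rw [h2]
  norm_num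

lemma integral_exp_neg_sq : ∫ t : ℝ, Real.exp (-t^2) = Real.sqrt π := by
  have := integral_gaussian 1
  simpa using this

section dim

variable (d : ℕ)

local notation "E" => EuclideanSpace ℝ (Fin (d + 1))

lemma gauss_const : ∫ x : E, Real.exp (-‖x‖^2) = Real.sqrt π ^ (d+1) := by
  rw [← ((EuclideanSpace.volume_preserving_symm_measurableEquiv_toLp (Fin (d+1))).symm _).integral_comp
    (MeasurableEquiv.toLp 2 (Fin (d+1) → ℝ)).symm.symm.measurableEmbedding
    (fun x : E => Real.exp (-‖x‖^2))]
  have hfun : (fun z : Fin (d+1) → ℝ =>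
      Real.exp (-‖(MeasurableEquiv.toLp 2 (Fin (d+1) → ℝ)).symm.symm z‖^2))
      = fun z => ∏ i, Real.exp (-(z i)^2) := by
    funext z
    rw [MeasurableEquiv.symm_symm, MeasurableEquiv.coe_toLp]
    rw [EuclideanSpace.norm_eq]
    rw [Real.sq_sqrt (by positivity)]
    rw [← Real.exp_sum, ← Finset.sum_neg_distrib]
    congr 1
    refine Finset.sum_congr rfl fun i _ => ?_
    rw [PiLp.toLp_apply, Real.norm_eq_abs, sq_abs]
  rw [hfun, MeasureTheory.integral_fintype_prod_volume_eq_pow (ι := Fin (d+1))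
    (f := fun t : ℝ => Real.exp (-t^2)), integral_exp_neg_sq, Fintype.card_fin]

lemma gauss_coord : ∫ y : E, |y 0| * Real.exp (-‖y‖^2) = Real.sqrt π ^ d := by
  rw [← ((EuclideanSpace.volume_preserving_symm_measurableEquiv_toLp (Fin (d+1))).symm _).integral_comp
    (MeasurableEquiv.toLp 2 (Fin (d+1) → ℝ)).symm.symm.measurableEmbedding
    (fun y : E => |y 0| * Real.exp (-‖y‖^2))]
  have hfun : (fun z : Fin (d+1) → ℝ =>
      |(MeasurableEquiv.toLp 2 (Fin (d+1) → ℝ)).symm.symm z 0| *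
        Real.exp (-‖(MeasurableEquiv.toLp 2 (Fin (d+1) → ℝ)).symm.symm z‖^2))
      = fun z => ∏ i, ((if i = 0 then |z i| else 1) * Real.exp (-(z i)^2)) := by
    funext z
    rw [Finset.prod_mul_distrib]
    rw [MeasurableEquiv.symm_symm, MeasurableEquiv.coe_toLp, EuclideanSpace.norm_eq,
      Real.sq_sqrt (by positivity), ← Real.exp_sum, ← Finset.sum_neg_distrib]
    congr 1
    · rw [Finset.prod_ite_eq' Finset.univ (0 : Fin (d+1)) (fun i => |z i|),
        if_pos (Finset.mem_univ _), PiLp.toLp_apply]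
    · congr 1
      refine Finset.sum_congr rfl fun i _ => ?_
      rw [PiLp.toLp_apply, Real.norm_eq_abs, sq_abs]
  rw [hfun, MeasureTheory.integral_fintype_prod_volume_eq_prod (ι := Fin (d+1))
    (f := fun i (t : ℝ) => (if i = 0 then |t| else 1) * Real.exp (-t^2))]
  rw [Fin.prod_univ_succ]
  have h0 : ∫ t : ℝ, (if (0 : Fin (d+1)) = 0 then |t| else 1) * Real.exp (-t^2) = 1 := by
    simp only [if_pos rfl]
    exact integral_abs_mul_exp
  have hs : ∀ i : Fin d, (∫ t : ℝ,
      (if (Fin.succ i : Fin (d+1)) = 0 then |t| else 1) * Real.exp (-t^2)) = Real.sqrt π := by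
    intro i
    simp only [if_neg (Fin.succ_ne_zero i), one_mul]
    exact integral_exp_neg_sq
  rw [h0, one_mul]
  calc (∏ i : Fin d, ∫ t : ℝ, (if (Fin.succ i : Fin (d+1)) = 0 then |t| else 1)
        * Real.exp (-t^2))
      = ∏ _i : Fin d, Real.sqrt π := Finset.prod_congr rfl (fun i _ => hs i)
    _ = Real.sqrt π ^ d := by rw [Finset.prod_const, Finset.card_univ, Fintype.card_fin]

lemma gauss_inner (u : E) (hu : ‖u‖ = 1) :
    ∫ x : E, |⟪x, u⟫| * Real.exp (-‖x‖^2) = Real.sqrt π ^ d := by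
  have horth : Orthonormal ℝ (Set.restrict ({0} : Set (Fin (d+1))) (fun _ => u)) := by
    constructor
    · intro i; exact hu
    · intro i j hij
      exfalso
      exact hij (Subtype.ext (i.2.trans j.2.symm))
  obtain ⟨b, hb⟩ := horth.exists_orthonormalBasis_extension_of_card_eq
    (by rw [finrank_euclideanSpace_fin, Fintype.card_fin])
  have hb0 : b 0 = u := hb 0 rfl
  have hmp := b.measurePreserving_repr_symm
  rw [← hmp.integral_comp (b.repr.symm.toHomeomorph.measurableEmbedding)
    (fun x : E => |⟪x, u⟫| * Real.exp (-‖x‖^2))]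
  have hfun : (fun y : EuclideanSpace ℝ (Fin (d+1)) =>
      |⟪b.repr.symm y, u⟫| * Real.exp (-‖b.repr.symm y‖^2))
      = fun y => |y 0| * Real.exp (-‖y‖^2) := by
    funext y
    have h1 : ⟪b.repr.symm y, u⟫ = y 0 := by
      rw [← hb0]
      have h2 := b.repr.inner_map_map (b.repr.symm y) (b 0)
      rw [b.repr.apply_symm_apply, b.repr_self,
        EuclideanSpace.inner_single_right] at h2
      rw [← h2]
      simp
    rw [h1, b.repr.symm.norm_map]
  rw [hfun]
  exact gauss_coord d

instance toSphere_finite : IsFiniteMeasure ((volume : Measure E).toSphere) := by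
  constructor
  rw [MeasureTheory.Measure.toSphere_apply_univ]
  exact ENNReal.mul_lt_top (by simp) measure_ball_lt_top

lemma polar_gen (F : Metric.sphere (0:E) 1 → ℝ) (G : ℝ → ℝ) (h : E → ℝ)
    (hh : ∀ x : ({(0:E)}ᶜ : Set E),
      h (x:E) = F ((homeomorphUnitSphereProd (EuclideanSpace ℝ (Fin (d+1)))) x).1
        * G (‖(x:E)‖)) :
    ∫ x : E, h x = (∫ θ : Metric.sphere (0:E) 1, F θ ∂((volume : Measure E).toSphere)) *
      ∫ r in Set.Ioi (0:ℝ), r ^ d * G r := by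
  have hdim : Module.finrank ℝ (EuclideanSpace ℝ (Fin (d+1))) - 1 = d := by
    rw [finrank_euclideanSpace_fin]
    omega
  have hmp := (volume : Measure E).measurePreserving_homeomorphUnitSphereProd
  rw [hdim] at hmp
  have hcomp := hmp.integral_comp (Homeomorph.measurableEmbedding _)
    (fun p : Metric.sphere (0:E) 1 × Set.Ioi (0:ℝ) => F p.1 * G (p.2:ℝ))
  calc ∫ x : E, h x
      = ∫ x : ({(0:E)}ᶜ : Set E), h x ∂((volume : Measure E).comap Subtype.val) := by
        rw [integral_subtype_comap (measurableSet_singleton (0:E)).compl h,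
          MeasureTheory.restrict_compl_singleton]
    _ = ∫ x : ({(0:E)}ᶜ : Set E),
          F ((homeomorphUnitSphereProd (EuclideanSpace ℝ (Fin (d+1)))) x).1
            * G ((((homeomorphUnitSphereProd (EuclideanSpace ℝ (Fin (d+1)))) x).2 : ℝ))
          ∂((volume : Measure E).comap Subtype.val) := by
        have heq : (fun x : ({(0:E)}ᶜ : Set E) => h (x:E))
            = fun x => F ((homeomorphUnitSphereProd (EuclideanSpace ℝ (Fin (d+1)))) x).1
              * G ((((homeomorphUnitSphereProd (EuclideanSpace ℝ (Fin (d+1)))) x).2 : ℝ)) := by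
          funext x
          rw [hh x]
          congr 1
          simp [homeomorphUnitSphereProd_apply_snd_coe]
        rw [heq]
    _ = ∫ p : Metric.sphere (0:E) 1 × Set.Ioi (0:ℝ), F p.1 * G (p.2:ℝ)
          ∂(((volume : Measure E).toSphere).prod (MeasureTheory.Measure.volumeIoiPow d)) :=
        hcomp
    _ = (∫ θ : Metric.sphere (0:E) 1, F θ ∂((volume : Measure E).toSphere)) *
          (∫ r : Set.Ioi (0:ℝ), G (r:ℝ) ∂(MeasureTheory.Measure.volumeIoiPow d)) :=
        MeasureTheory.integral_prod_mul F (fun r : Set.Ioi (0:ℝ) => G (r:ℝ))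
    _ = _ := by rw [integral_volumeIoiPow d G]

lemma polar_inner (u : E) (hu : ‖u‖ = 1) :
    (∫ θ : Metric.sphere (0:E) 1, |⟪(θ:E), u⟫| ∂((volume : Measure E).toSphere)) *
      ((1/2) * Real.Gamma ((((d:ℝ)+1)+1)/2)) = Real.sqrt π ^ d := by
  have hh : ∀ x : ({(0:E)}ᶜ : Set E),
      |⟪(x:E), u⟫| * Real.exp (-‖(x:E)‖^2) =
        |⟪(((homeomorphUnitSphereProd (EuclideanSpace ℝ (Fin (d+1)))) x).1 : E), u⟫|
          * (‖(x:E)‖ * Real.exp (-‖(x:E)‖^2)) := by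
    intro x
    have hx0 : (x:E) ≠ 0 := Set.mem_compl_singleton_iff.mp x.2
    have h0 : ‖(x:E)‖ ≠ 0 := norm_ne_zero_iff.mpr hx0
    simp only [homeomorphUnitSphereProd_apply_fst_coe]
    rw [real_inner_smul_left, abs_mul, abs_inv, abs_norm]
    field_simp
  have hpg := polar_gen d (F := fun θ : Metric.sphere (0:E) 1 => |⟪(θ:E), u⟫|)
    (G := fun r => r * Real.exp (-r^2)) (h := fun x : E => |⟪x, u⟫| * Real.exp (-‖x‖^2)) hh
  have hrad : ∫ r in Set.Ioi (0:ℝ), r ^ d * (r * Real.exp (-r^2))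
      = (1/2) * Real.Gamma ((((d:ℝ)+1)+1)/2) := by
    have h1 := integral_Ioi_pow_exp (d+1)
    push_cast at h1
    rw [← h1]
    refine setIntegral_congr_fun measurableSet_Ioi fun x _ => ?_
    rw [pow_succ]; ring
  rw [← hrad, ← hpg, gauss_inner d u hu]

lemma polar_const :
    (((volume : Measure E).toSphere) Set.univ).toReal *
      ((1/2) * Real.Gamma (((d:ℝ)+1)/2)) = Real.sqrt π ^ (d+1) := by
  have hh : ∀ x : ({(0:E)}ᶜ : Set E),
      Real.exp (-‖(x:E)‖^2) = (1:ℝ) * (Real.exp (-‖(x:E)‖^2)) := by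
    intro x; rw [one_mul]
  have hpg := polar_gen d (F := fun _ : Metric.sphere (0:E) 1 => (1:ℝ))
    (G := fun r => Real.exp (-r^2)) (h := fun x : E => Real.exp (-‖x‖^2)) hh
  have hrad : ∫ r in Set.Ioi (0:ℝ), r ^ d * Real.exp (-r^2)
      = (1/2) * Real.Gamma (((d:ℝ)+1)/2) := integral_Ioi_pow_exp d
  have hconst : (∫ _θ : Metric.sphere (0:E) 1, (1:ℝ) ∂((volume : Measure E).toSphere))
      = (((volume : Measure E).toSphere) Set.univ).toReal := by
    rw [integral_const, smul_eq_mul, mul_one]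
    rfl
  rw [← hrad, ← hconst, ← hpg, gauss_const d]

lemma avg (hd : 1 ≤ d) (u : E) (hu : ‖u‖ = 1) :
    ∫ θ : Metric.sphere (0:E) 1, |⟪(θ:E), u⟫| ∂((volume : Measure E).toSphere)
      = (2 / (d * realBeta ((d:ℝ)/2) (1/2)))
        * (((volume : Measure E).toSphere) Set.univ).toReal := by
  have h1 := polar_inner d u hu
  have h2 := polar_const d
  set J := ∫ θ : Metric.sphere (0:E) 1, |⟪(θ:E), u⟫| ∂((volume : Measure E).toSphere) with hJdef
  set M := (((volume : Measure E).toSphere) Set.univ).toReal with hMdef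
  set S := Real.sqrt π with hSdef
  have hS : 0 < S := Real.sqrt_pos.mpr Real.pi_pos
  have hd0 : (d:ℝ) ≠ 0 := by
    have : (1:ℝ) ≤ (d:ℝ) := by exact_mod_cast hd
    linarith
  have hG2 : 0 < Real.Gamma ((d:ℝ)/2) := Real.Gamma_pos_of_pos (by positivity)
  have hH : 0 < Real.Gamma ((d:ℝ)/2 + 1/2) := Real.Gamma_pos_of_pos (by positivity)
  have e1 : (((d:ℝ)+1)+1)/2 = (d:ℝ)/2 + 1 := by ring
  have e2 : ((d:ℝ)+1)/2 = (d:ℝ)/2 + 1/2 := by ring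
  rw [e1, Real.Gamma_add_one (by positivity : (d:ℝ)/2 ≠ 0)] at h1
  rw [e2] at h2
  have hbeta : realBeta ((d:ℝ)/2) (1/2) = Real.Gamma ((d:ℝ)/2) * S / Real.Gamma ((d:ℝ)/2 + 1/2) := by
    rw [realBeta, Real.Gamma_one_half_eq, hSdef]
  have hJ : J = 4 * S ^ d / ((d:ℝ) * Real.Gamma ((d:ℝ)/2)) := by
    rw [eq_div_iff (by positivity)]
    linear_combination 4 * h1
  have hM : M = 2 * S ^ (d+1) / Real.Gamma ((d:ℝ)/2 + 1/2) := by
    rw [eq_div_iff hH.ne']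
    linear_combination 2 * h2
  rw [hJ, hM, hbeta, pow_succ]
  field_simp
  ring

lemma M_pos : 0 < (((volume : Measure E).toSphere) Set.univ).toReal := by
  have h2 := polar_const d
  have hH : 0 < Real.Gamma (((d:ℝ)+1)/2) := Real.Gamma_pos_of_pos (by positivity)
  have hS : 0 < Real.sqrt π := Real.sqrt_pos.mpr Real.pi_pos
  have hMeq : (((volume : Measure E).toSphere) Set.univ).toReal
      = Real.sqrt π ^ (d+1) / ((1/2) * Real.Gamma (((d:ℝ)+1)/2)) := by
    rw [eq_div_iff (by positivity)]
    linear_combination h2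
  rw [hMeq]
  positivity

lemma exists_good (hd : 1 ≤ d) {ι : Type*} (s : Finset ι) (F : ι → E)
    (hF : ∀ i ∈ s, ‖F i‖ = 1) :
    ∃ θ : E, ‖θ‖ = 1 ∧
      (s.card : ℝ) * (2 / (d * realBeta ((d:ℝ)/2) (1/2))) ≤ ∑ i ∈ s, |⟪θ, F i⟫| := by
  by_contra hcon
  push_neg at hcon
  set ν := (volume : Measure E).toSphere with hνdef
  have hMpos : 0 < (ν Set.univ).toReal := M_pos d
  haveI : CompactSpace (Metric.sphere (0:E) 1) := Metric.sphere.compactSpace _ _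
  have hint : ∀ w : E, Integrable (fun θ : Metric.sphere (0:E) 1 => |⟪(θ:E), w⟫|) ν := by
    intro w
    have hcont : Continuous fun θ : Metric.sphere (0:E) 1 => |⟪(θ:E), w⟫| :=
      (continuous_subtype_val.inner continuous_const).abs
    exact hcont.integrable_of_hasCompactSupport
      (IsCompact.of_isClosed_subset isCompact_univ (isClosed_tsupport _) (Set.subset_univ _))
  have hGsum : (∫ θ : Metric.sphere (0:E) 1, (∑ i ∈ s, |⟪(θ:E), F i⟫|) ∂ν)
      = ((s.card : ℝ) * (2 / (d * realBeta ((d:ℝ)/2) (1/2)))) * (ν Set.univ).toReal := by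
    rw [MeasureTheory.integral_finset_sum s (fun i _ => hint (F i)),
      Finset.sum_congr rfl (fun i hi => avg d hd (F i) (hF i hi)),
      Finset.sum_const, nsmul_eq_mul]
    ring
  have htpos : ∀ θ : Metric.sphere (0:E) 1,
      0 < (s.card : ℝ) * (2 / (d * realBeta ((d:ℝ)/2) (1/2))) - ∑ i ∈ s, |⟪(θ:E), F i⟫| := by
    intro θ
    have hθ : ‖(θ:E)‖ = 1 := by
      have h := θ.2
      rwa [mem_sphere_zero_iff_norm] at h
    exact sub_pos.mpr (hcon (θ:E) hθ)
  have hti : Integrable (fun θ : Metric.sphere (0:E) 1 =>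
      (s.card : ℝ) * (2 / (d * realBeta ((d:ℝ)/2) (1/2))) - ∑ i ∈ s, |⟪(θ:E), F i⟫|) ν :=
    (integrable_const _).sub (MeasureTheory.integrable_finset_sum s (fun i _ => hint (F i)))
  have htzero : (∫ θ : Metric.sphere (0:E) 1,
      ((s.card : ℝ) * (2 / (d * realBeta ((d:ℝ)/2) (1/2))) - ∑ i ∈ s, |⟪(θ:E), F i⟫|) ∂ν) = 0 := by
    rw [MeasureTheory.integral_sub (integrable_const _)
      (MeasureTheory.integrable_finset_sum s (fun i _ => hint (F i))), integral_const, hGsum]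
    simp [smul_eq_mul]
    rw [measureReal_def]
    ring
  have hsupp := (integral_pos_iff_support_of_nonneg (fun θ => (htpos θ).le) hti).mpr ?_
  · rw [htzero] at hsupp
    exact lt_irrefl 0 hsupp
  · have hsupp_univ : (Function.support fun θ : Metric.sphere (0:E) 1 =>
        (s.card : ℝ) * (2 / (d * realBeta ((d:ℝ)/2) (1/2))) - ∑ i ∈ s, |⟪(θ:E), F i⟫|)
        = Set.univ := Set.eq_univ_of_forall (fun θ => (htpos θ).ne')
    rw [hsupp_univ]
    refine MeasureTheory.Measure.measure_univ_pos.mpr ?_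
    intro h0
    rw [h0] at hMpos
    simp at hMpos

end dim

end SphereAvg

namespace TreeDisc

open Finset
set_option linter.unusedSectionVars false


variable {V : Type*} [Fintype V] [DecidableEq V] (T : SimpleGraph V) [DecidableRel T.Adj]
  (g : Sym2 V → ℝ)

/-- `W` is connected in `T` via walks staying inside `W`. -/
def Conn (W : Finset V) : Prop :=
  ∀ x ∈ W, ∀ y ∈ W, ∃ p : T.Walk x y, ∀ z ∈ p.support, z ∈ W

/-- Sum of `g` over edges of `T` inside `W`. -/
def sig (W : Finset V) : ℝ := ∑ e ∈ T.edgeFinset ∩ W.sym2, g e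

/-- Sum over leaves (relative to `W`) other than `r` of the leaf-edge weights in abs value. -/
def lsum (W : Finset V) (r : V) : ℝ :=
  ∑ v ∈ (W.erase r).filter (fun v => (W.filter (fun u => T.Adj v u)).card = 1),
    ∑ u ∈ W.filter (fun u => T.Adj v u), |g s(v, u)|

lemma conn_singleton (r : V) : Conn T {r} := by
  intro x hx y hy
  simp only [Finset.mem_singleton] at hx hy
  subst hx; subst hy
  exact ⟨SimpleGraph.Walk.nil, by simp⟩

lemma conn_union {P Q : Finset V} {a b : V} (hP : Conn T P) (hQ : Conn T Q)
    (ha : a ∈ P) (hb : b ∈ Q) (hab : T.Adj a b) : Conn T (P ∪ Q) := by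
  have key : ∀ x ∈ P ∪ Q, ∃ p : T.Walk x b, ∀ z ∈ p.support, z ∈ P ∪ Q := by
    intro x hx
    rcases Finset.mem_union.mp hx with hxP | hxQ
    · obtain ⟨p, hp⟩ := hP x hxP a ha
      refine ⟨p.concat hab, ?_⟩
      intro z hz
      rw [SimpleGraph.Walk.support_concat, List.mem_append, List.mem_singleton] at hz
      rcases hz with hz | rfl
      · exact Finset.mem_union_left _ (hp z hz)
      · exact Finset.mem_union_right _ hb
    · obtain ⟨p, hp⟩ := hQ x hxQ b hb
      exact ⟨p, fun z hz => Finset.mem_union_right _ (hp z hz)⟩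
  intro x hx y hy
  obtain ⟨p, hp⟩ := key x hx
  obtain ⟨q, hq⟩ := key y hy
  refine ⟨p.append q.reverse, ?_⟩
  intro z hz
  rw [SimpleGraph.Walk.support_append] at hz
  rcases List.mem_append.mp hz with hz | hz
  · exact hp z hz
  · refine hq z ?_
    have := List.mem_of_mem_tail hz
    rwa [SimpleGraph.Walk.support_reverse, List.mem_reverse] at this

lemma sig_singleton (r : V) : sig T g {r} = 0 := by
  refine Finset.sum_eq_zero ?_
  intro e he
  exfalso
  rw [Finset.mem_inter] at he
  obtain ⟨h1, h2⟩ := he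
  induction e with
  | _ x y =>
    rw [Finset.mk_mem_sym2_iff] at h2
    simp only [Finset.mem_singleton] at h2
    obtain ⟨rfl, rfl⟩ := h2
    exact T.irrefl (SimpleGraph.mem_edgeFinset.mp h1)

lemma sig_union_split {Wr Wc P Q : Finset V} {r c : V}
    (hdisj : ∀ x, x ∈ Wr → x ∈ Wc → False)
    (hcross : ∀ x y, x ∈ Wr → y ∈ Wc → T.Adj x y → s(x, y) = s(r, c))
    (hPr : P ⊆ Wr) (hQc : Q ⊆ Wc) (hrP : r ∈ P) (hcQ : c ∈ Q) (hrc : T.Adj r c) :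
    sig T g (P ∪ Q) = sig T g P + sig T g Q + g s(r, c) := by
  have key : T.edgeFinset ∩ (P ∪ Q).sym2 =
      ((T.edgeFinset ∩ P.sym2) ∪ (T.edgeFinset ∩ Q.sym2)) ∪ {s(r, c)} := by
    ext e
    induction e with
    | _ x y =>
      simp only [Finset.mem_inter, Finset.mem_union, Finset.mk_mem_sym2_iff,
        Finset.mem_singleton, SimpleGraph.mem_edgeFinset, SimpleGraph.mem_edgeSet]
      constructor
      · rintro ⟨hadj, hx, hy⟩
        rcases hx with hxP | hxQ <;> rcases hy with hyP | hyQ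
        · exact Or.inl (Or.inl ⟨hadj, hxP, hyP⟩)
        · exact Or.inr (hcross x y (hPr hxP) (hQc hyQ) hadj)
        · refine Or.inr ?_
          rw [Sym2.eq_swap]
          exact hcross y x (hPr hyP) (hQc hxQ) hadj.symm
        · exact Or.inl (Or.inr ⟨hadj, hxQ, hyQ⟩)
      · rintro ((⟨hadj, hx, hy⟩ | ⟨hadj, hx, hy⟩) | heq)
        · exact ⟨hadj, Or.inl hx, Or.inl hy⟩
        · exact ⟨hadj, Or.inr hx, Or.inr hy⟩
        · rw [Sym2.eq_iff] at heq
          rcases heq with ⟨rfl, rfl⟩ | ⟨rfl, rfl⟩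
          · exact ⟨hrc, Or.inl hrP, Or.inr hcQ⟩
          · exact ⟨hrc.symm, Or.inr hcQ, Or.inl hrP⟩
  have hd1 : Disjoint (T.edgeFinset ∩ P.sym2) (T.edgeFinset ∩ Q.sym2) := by
    rw [Finset.disjoint_left]
    intro e he1 he2
    rw [Finset.mem_inter] at he1 he2
    induction e with
    | _ x y =>
      rw [Finset.mk_mem_sym2_iff] at he1 he2
      exact hdisj x (hPr he1.2.1) (hQc he2.2.1)
  have hd2 : Disjoint ((T.edgeFinset ∩ P.sym2) ∪ (T.edgeFinset ∩ Q.sym2)) {s(r, c)} := by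
    rw [Finset.disjoint_right]
    intro e he1 he2
    rw [Finset.mem_singleton] at he1
    subst he1
    rcases Finset.mem_union.mp he2 with h | h <;> rw [Finset.mem_inter, Finset.mk_mem_sym2_iff] at h
    · exact hdisj c (hPr h.2.2) (hQc hcQ)
    · exact hdisj r (hPr hrP) (hQc h.2.1)
  rw [sig, key, Finset.sum_union hd2, Finset.sum_union hd1, Finset.sum_singleton]
  rfl


lemma core (hA : T.IsAcyclic) :
    ∀ n (W : Finset V), W.card ≤ n → Conn T W → ∀ r ∈ W,
      ∃ W1 W2 : Finset V, W1 ⊆ W ∧ W2 ⊆ W ∧ r ∈ W1 ∧ r ∈ W2 ∧ Conn T W1 ∧ Conn T W2 ∧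
        lsum T g W r ≤ sig T g W1 - sig T g W2 := by
  classical
  intro n
  induction n with
  | zero =>
    intro W hcard _ r hr
    exact absurd (Finset.card_pos.mpr ⟨r, hr⟩) (by omega)
  | succ n IH =>
    intro W hcard hconn r hr
    by_cases hN : ∃ c ∈ W, T.Adj r c
    case neg =>
      have hWr : W = {r} := by
        apply Finset.eq_singleton_iff_unique_mem.mpr
        refine ⟨hr, ?_⟩
        intro x hx
        by_contra hxr
        obtain ⟨p, hp⟩ := hconn r hr x hx
        cases p with
        | nil => exact hxr rfl
        | cons h q =>
          refine hN ⟨_, hp _ ?_, h⟩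
          rw [SimpleGraph.Walk.support_cons]
          exact List.mem_cons_of_mem _ q.start_mem_support
      refine ⟨{r}, {r}, by rw [hWr], by rw [hWr], Finset.mem_singleton_self r,
        Finset.mem_singleton_self r, conn_singleton T r, conn_singleton T r, ?_⟩
      rw [hWr, lsum]
      simp
    case pos =>
      obtain ⟨c, hcW, hrc⟩ := hN
      set G' : SimpleGraph V := T.deleteEdges {s(r, c)} with hG'def
      have hbr : ¬ G'.Reachable r c := by
        have hb := (isAcyclic_iff_forall_adj_isBridge.mp hA) hrc
        rw [isBridge_iff] at hb
        exact hb
      have hG'le : G' ≤ T := SimpleGraph.deleteEdges_le _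
      -- the two sides
      set Wr : Finset V := W.filter (fun x => ∃ p : G'.Walk r x, ∀ z ∈ p.support, z ∈ W)
        with hWrdef
      set Wc : Finset V := W.filter (fun x => ∃ p : G'.Walk c x, ∀ z ∈ p.support, z ∈ W)
        with hWcdef
      have hWrmem : ∀ x, x ∈ Wr ↔ x ∈ W ∧ ∃ p : G'.Walk r x, ∀ z ∈ p.support, z ∈ W := by
        intro x; rw [hWrdef, Finset.mem_filter]
      have hWcmem : ∀ x, x ∈ Wc ↔ x ∈ W ∧ ∃ p : G'.Walk c x, ∀ z ∈ p.support, z ∈ W := by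
        intro x; rw [hWcdef, Finset.mem_filter]
      have hWrW : Wr ⊆ W := Finset.filter_subset _ _
      have hWcW : Wc ⊆ W := Finset.filter_subset _ _
      have hrWr : r ∈ Wr := (hWrmem r).mpr ⟨hr, SimpleGraph.Walk.nil, by
        intro z hz; rw [SimpleGraph.Walk.support_nil, List.mem_singleton] at hz; rwa [hz]⟩
      have hcWc : c ∈ Wc := (hWcmem c).mpr ⟨hcW, SimpleGraph.Walk.nil, by
        intro z hz; rw [SimpleGraph.Walk.support_nil, List.mem_singleton] at hz; rwa [hz]⟩
      have hdisj : ∀ x, x ∈ Wr → x ∈ Wc → False := by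
        intro x h1 h2
        obtain ⟨-, p, -⟩ := (hWrmem x).mp h1
        obtain ⟨-, q, -⟩ := (hWcmem x).mp h2
        exact hbr ⟨p.append q.reverse⟩
      have hext : ∀ (a x y : V), (∃ p : G'.Walk a x, ∀ z ∈ p.support, z ∈ W) →
          G'.Adj x y → y ∈ W → ∃ p : G'.Walk a y, ∀ z ∈ p.support, z ∈ W := by
        rintro a x y ⟨p, hp⟩ hxy hyW
        refine ⟨p.concat hxy, ?_⟩
        intro z hz
        rw [SimpleGraph.Walk.support_concat, List.mem_append,
          List.mem_singleton] at hz
        rcases hz with hz | rfl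
        · exact hp z hz
        · exact hyW
      have mkConn : ∀ (a : V) (D : Finset V),
          (∀ x, x ∈ D ↔ x ∈ W ∧ ∃ p : G'.Walk a x, ∀ z ∈ p.support, z ∈ W) → Conn T D := by
        intro a D hD
        have hsubD : ∀ (x : V) (p : G'.Walk a x), (∀ z ∈ p.support, z ∈ W) →
            ∀ z ∈ p.support, z ∈ D := by
          intro x p hp z hz
          obtain ⟨p1, p2, rfl⟩ := SimpleGraph.Walk.mem_support_iff_exists_append.mp hz
          refine (hD z).mpr ⟨hp z hz, p1, ?_⟩
          intro w hw
          refine hp w ?_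
          rw [SimpleGraph.Walk.support_append]
          exact List.mem_append_left _ hw
        intro x hx y hy
        obtain ⟨hxW, p, hp⟩ := (hD x).mp hx
        obtain ⟨hyW, q, hq⟩ := (hD y).mp hy
        refine ⟨(p.reverse.append q).mapLe hG'le, ?_⟩
        intro z hz
        have hz' : z ∈ (p.reverse.append q).support := by
          simpa [SimpleGraph.Walk.mapLe, SimpleGraph.Walk.support_map] using hz
        rw [SimpleGraph.Walk.support_append] at hz'
        rcases List.mem_append.mp hz' with hz' | hz'
        · rw [SimpleGraph.Walk.support_reverse, List.mem_reverse] at hz'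
          exact hsubD x p hp z hz'
        · exact hsubD y q hq z (List.mem_of_mem_tail hz')
      have hConnWr : Conn T Wr := mkConn r Wr hWrmem
      have hConnWc : Conn T Wc := mkConn c Wc hWcmem
      have hpart : ∀ x ∈ W, x ∈ Wr ∨ x ∈ Wc := by
        have haux : ∀ (y z : V) (p : T.Walk y z), (∀ w ∈ p.support, w ∈ W) →
            (y ∈ Wr ∨ y ∈ Wc) → (z ∈ Wr ∨ z ∈ Wc) := by
          intro y z p
          induction p with
          | nil => exact fun _ hy => hy
          | @cons a b z h q ih =>
            intro hsupp hy
            have hbW : b ∈ W := by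
              refine hsupp b ?_
              rw [SimpleGraph.Walk.support_cons]
              exact List.mem_cons_of_mem _ q.start_mem_support
            refine ih (fun w hw => hsupp w (by
              rw [SimpleGraph.Walk.support_cons]; exact List.mem_cons_of_mem _ hw)) ?_
            by_cases he : s(a, b) = s(r, c)
            · rw [Sym2.eq_iff] at he
              rcases he with ⟨rfl, rfl⟩ | ⟨rfl, rfl⟩
              · exact Or.inr hcWc
              · exact Or.inl hrWr
            · have hG'ab : G'.Adj a b := by
                rw [hG'def, SimpleGraph.deleteEdges_adj]
                exact ⟨h, by simpa using he⟩
              rcases hy with hy | hy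
              · exact Or.inl ((hWrmem b).mpr ⟨hbW, hext r a b ((hWrmem a).mp hy).2 hG'ab hbW⟩)
              · exact Or.inr ((hWcmem b).mpr ⟨hbW, hext c a b ((hWcmem a).mp hy).2 hG'ab hbW⟩)
        intro x hx
        obtain ⟨p, hp⟩ := hconn r hr x hx
        exact haux r x p hp (Or.inl hrWr)
      have hcross : ∀ x y, x ∈ Wr → y ∈ Wc → T.Adj x y → s(x, y) = s(r, c) := by
        intro x y hx hy hxy
        by_contra hne
        have hG'xy : G'.Adj x y := by
          rw [hG'def, SimpleGraph.deleteEdges_adj]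
          exact ⟨hxy, by simpa using hne⟩
        exact hdisj y ((hWrmem y).mpr ⟨hWcW hy, hext r x y ((hWrmem x).mp hx).2 hG'xy (hWcW hy)⟩) hy
      have hcWr : c ∉ Wr := fun h => hdisj c h hcWc
      have hrWc : r ∉ Wc := fun h => hdisj r hrWr h
      have hrcne : r ≠ c := hrc.ne
      have hWrcard : Wr.card ≤ n := by
        have : Wr.card < W.card :=
          Finset.card_lt_card ⟨hWrW, fun h => hcWr (h hcW)⟩
        omega
      have hWccard : Wc.card ≤ n := by
        have : Wc.card < W.card :=
          Finset.card_lt_card ⟨hWcW, fun h => hrWc (h hr)⟩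
        omega
      -- degrees are preserved on each side
      have hdegr : ∀ v ∈ Wr, v ≠ r →
          W.filter (fun u => T.Adj v u) = Wr.filter (fun u => T.Adj v u) := by
        intro v hv hvr
        ext u
        simp only [Finset.mem_filter]
        constructor
        · rintro ⟨huW, hadj⟩
          refine ⟨?_, hadj⟩
          rcases hpart u huW with hu | hu
          · exact hu
          · exfalso
            have := hcross v u hv hu hadj
            rw [Sym2.eq_iff] at this
            rcases this with ⟨rfl, rfl⟩ | ⟨rfl, rfl⟩
            · exact hvr rfl
            · exact hcWr hv
        · rintro ⟨huW, hadj⟩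
          exact ⟨hWrW huW, hadj⟩
      have hdegc : ∀ v ∈ Wc, v ≠ c →
          W.filter (fun u => T.Adj v u) = Wc.filter (fun u => T.Adj v u) := by
        intro v hv hvc
        ext u
        simp only [Finset.mem_filter]
        constructor
        · rintro ⟨huW, hadj⟩
          refine ⟨?_, hadj⟩
          rcases hpart u huW with hu | hu
          · exfalso
            have := hcross u v hu hv hadj.symm
            rw [Sym2.eq_iff] at this
            rcases this with ⟨rfl, rfl⟩ | ⟨rfl, rfl⟩
            · exact hvc rfl
            · exact hrWc hv
          · exact hu
        · rintro ⟨huW, hadj⟩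
          exact ⟨hWcW huW, hadj⟩
      -- transfer of lsum between W and the parts
      have hsumAr : ∑ v ∈ (Wr.erase r).filter
            (fun v => (Wr.filter (fun u => T.Adj v u)).card = 1),
            (∑ u ∈ W.filter (fun u => T.Adj v u), |g s(v, u)|) = lsum T g Wr r := by
        rw [lsum]
        refine Finset.sum_congr rfl ?_
        intro v hv
        rw [Finset.mem_filter, Finset.mem_erase] at hv
        rw [hdegr v hv.1.2 hv.1.1]
      have hsumAc : ∑ v ∈ (Wc.erase c).filter
            (fun v => (Wc.filter (fun u => T.Adj v u)).card = 1),
            (∑ u ∈ W.filter (fun u => T.Adj v u), |g s(v, u)|) = lsum T g Wc c := by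
        rw [lsum]
        refine Finset.sum_congr rfl ?_
        intro v hv
        rw [Finset.mem_filter, Finset.mem_erase] at hv
        rw [hdegc v hv.1.2 hv.1.1]
      have hd_ArAc : Disjoint
          ((Wr.erase r).filter (fun v => (Wr.filter (fun u => T.Adj v u)).card = 1))
          ((Wc.erase c).filter (fun v => (Wc.filter (fun u => T.Adj v u)).card = 1)) := by
        rw [Finset.disjoint_left]
        intro v hv1 hv2
        rw [Finset.mem_filter, Finset.mem_erase] at hv1 hv2
        exact hdisj v hv1.1.2 hv2.1.2
      have hA_mem : ∀ v, (v ∈ (W.erase r).filter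
            (fun v => (W.filter (fun u => T.Adj v u)).card = 1)) ↔
          (v ∈ (Wr.erase r).filter (fun v => (Wr.filter (fun u => T.Adj v u)).card = 1) ∨
           v ∈ (Wc.erase c).filter (fun v => (Wc.filter (fun u => T.Adj v u)).card = 1) ∨
           (v = c ∧ (W.filter (fun u => T.Adj c u)).card = 1)) := by
        intro v
        simp only [Finset.mem_filter, Finset.mem_erase]
        constructor
        · rintro ⟨⟨hvr, hvW⟩, hPW⟩
          rcases hpart v hvW with hv | hv
          · left
            refine ⟨⟨hvr, hv⟩, ?_⟩
            rwa [← hdegr v hv hvr]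
          · by_cases hvc : v = c
            · subst hvc
              exact Or.inr (Or.inr ⟨rfl, hPW⟩)
            · refine Or.inr (Or.inl ⟨⟨hvc, hv⟩, ?_⟩)
              rwa [← hdegc v hv hvc]
        · rintro (⟨⟨hvr, hv⟩, hcard1⟩ | ⟨⟨hvc, hv⟩, hcard1⟩ | ⟨rfl, hcard1⟩)
          · refine ⟨⟨hvr, hWrW hv⟩, ?_⟩
            rwa [hdegr v hv hvr]
          · refine ⟨⟨fun h => hrWc (h ▸ hv), hWcW hv⟩, ?_⟩
            rwa [hdegc v hv hvc]
          · exact ⟨⟨fun h => hrcne h.symm, hcW⟩, hcard1⟩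
      by_cases hcleaf : (W.filter (fun u => T.Adj c u)).card = 1
      case pos =>
        -- c is a leaf of W; its side is a singleton
        have hfc : W.filter (fun u => T.Adj c u) = {r} := by
          obtain ⟨x, hx⟩ := Finset.card_eq_one.mp hcleaf
          have hrin : r ∈ W.filter (fun u => T.Adj c u) :=
            Finset.mem_filter.mpr ⟨hr, hrc.symm⟩
          rw [hx] at hrin ⊢
          rw [Finset.mem_singleton] at hrin
          rw [hrin]
        have hWc1 : Wc = {c} := by
          apply Finset.eq_singleton_iff_unique_mem.mpr
          refine ⟨hcWc, ?_⟩
          intro x hx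
          by_contra hxc
          obtain ⟨hxW, p, hp⟩ := (hWcmem x).mp hx
          cases p with
          | nil => exact hxc rfl
          | @cons _ z _ h q =>
            have hzW : z ∈ W := by
              refine hp z ?_
              rw [SimpleGraph.Walk.support_cons]
              exact List.mem_cons_of_mem _ q.start_mem_support
            rw [hG'def, SimpleGraph.deleteEdges_adj] at h
            have hzr : z ∈ W.filter (fun u => T.Adj c u) :=
              Finset.mem_filter.mpr ⟨hzW, h.1⟩
            rw [hfc, Finset.mem_singleton] at hzr
            subst hzr
            exact h.2 (by rw [Sym2.eq_swap]; exact Set.mem_singleton _)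
        have hAc_empty : (Wc.erase c).filter
            (fun v => (Wc.filter (fun u => T.Adj v u)).card = 1) = ∅ := by
          rw [hWc1, Finset.erase_singleton, Finset.filter_empty]
        have hAeq : (W.erase r).filter
              (fun v => (W.filter (fun u => T.Adj v u)).card = 1) =
            ((Wr.erase r).filter (fun v => (Wr.filter (fun u => T.Adj v u)).card = 1))
              ∪ {c} := by
          ext v
          rw [hA_mem v, Finset.mem_union, Finset.mem_singleton, hAc_empty]
          simp [hcleaf]
        have hcAr : c ∉ (Wr.erase r).filter
            (fun v => (Wr.filter (fun u => T.Adj v u)).card = 1) := by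
          intro h
          rw [Finset.mem_filter, Finset.mem_erase] at h
          exact hcWr h.1.2
        have hlW : lsum T g W r = lsum T g Wr r + |g s(r, c)| := by
          rw [lsum, hAeq, Finset.sum_union (Finset.disjoint_singleton_right.mpr hcAr),
            Finset.sum_singleton, hsumAr, hfc, Finset.sum_singleton, Sym2.eq_swap]
        obtain ⟨P1, P2, hP1Wr, hP2Wr, hrP1, hrP2, hcP1, hcP2, hdiffr⟩ :=
          IH Wr hWrcard hConnWr r hrWr
        have hcsub : ({c} : Finset V) ⊆ Wc := Finset.singleton_subset_iff.mpr hcWc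
        rcases le_or_gt 0 (g s(r, c)) with hsgn | hsgn
        · refine ⟨P1 ∪ {c}, P2, Finset.union_subset (hP1Wr.trans hWrW)
            (Finset.singleton_subset_iff.mpr hcW), hP2Wr.trans hWrW,
            Finset.mem_union_left _ hrP1, hrP2,
            conn_union T hcP1 (conn_singleton T c) hrP1 (Finset.mem_singleton_self c) hrc,
            hcP2, ?_⟩
          rw [sig_union_split T g hdisj hcross hP1Wr hcsub hrP1 (Finset.mem_singleton_self c) hrc,
            sig_singleton, hlW]
          rw [abs_of_nonneg hsgn]
          linarith
        · refine ⟨P1, P2 ∪ {c}, hP1Wr.trans hWrW, Finset.union_subset (hP2Wr.trans hWrW)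
            (Finset.singleton_subset_iff.mpr hcW),
            hrP1, Finset.mem_union_left _ hrP2, hcP1,
            conn_union T hcP2 (conn_singleton T c) hrP2 (Finset.mem_singleton_self c) hrc, ?_⟩
          rw [sig_union_split T g hdisj hcross hP2Wr hcsub hrP2 (Finset.mem_singleton_self c) hrc,
            sig_singleton, hlW]
          rw [abs_of_neg hsgn]
          linarith
      case neg =>
        have hAeq : (W.erase r).filter
              (fun v => (W.filter (fun u => T.Adj v u)).card = 1) =
            ((Wr.erase r).filter (fun v => (Wr.filter (fun u => T.Adj v u)).card = 1))
              ∪ ((Wc.erase c).filter (fun v => (Wc.filter (fun u => T.Adj v u)).card = 1)) := by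
          ext v
          rw [hA_mem v, Finset.mem_union]
          constructor
          · rintro (h | h | ⟨rfl, h⟩)
            · exact Or.inl h
            · exact Or.inr h
            · exact absurd h hcleaf
          · rintro (h | h)
            · exact Or.inl h
            · exact Or.inr (Or.inl h)
        have hlW : lsum T g W r = lsum T g Wr r + lsum T g Wc c := by
          rw [lsum, hAeq, Finset.sum_union hd_ArAc, hsumAr, hsumAc]
        obtain ⟨P1, P2, hP1Wr, hP2Wr, hrP1, hrP2, hcP1, hcP2, hdiffr⟩ :=
          IH Wr hWrcard hConnWr r hrWr
        obtain ⟨Q1, Q2, hQ1Wc, hQ2Wc, hcQ1, hcQ2, hcoQ1, hcoQ2, hdiffc⟩ :=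
          IH Wc hWccard hConnWc c hcWc
        have hsig1 : sig T g (P1 ∪ Q1) = sig T g P1 + sig T g Q1 + g s(r, c) :=
          sig_union_split T g hdisj hcross hP1Wr hQ1Wc hrP1 hcQ1 hrc
        have hsig2 : sig T g (P2 ∪ Q2) = sig T g P2 + sig T g Q2 + g s(r, c) :=
          sig_union_split T g hdisj hcross hP2Wr hQ2Wc hrP2 hcQ2 hrc
        have hu1 : P1 ∪ Q1 ⊆ W :=
          Finset.union_subset (hP1Wr.trans hWrW) (hQ1Wc.trans hWcW)
        have hu2 : P2 ∪ Q2 ⊆ W :=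
          Finset.union_subset (hP2Wr.trans hWrW) (hQ2Wc.trans hWcW)
        have hc1 : Conn T (P1 ∪ Q1) := conn_union T hcP1 hcoQ1 hrP1 hcQ1 hrc
        have hc2 : Conn T (P2 ∪ Q2) := conn_union T hcP2 hcoQ2 hrP2 hcQ2 hrc
        by_cases h1 : 0 ≤ g s(r, c) + sig T g Q1 <;>
          by_cases h2 : g s(r, c) + sig T g Q2 ≤ 0
        · refine ⟨P1 ∪ Q1, P2 ∪ Q2, hu1, hu2, Finset.mem_union_left _ hrP1,
            Finset.mem_union_left _ hrP2, hc1, hc2, ?_⟩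
          rw [hlW, hsig1, hsig2]; linarith
        · refine ⟨P1 ∪ Q1, P2, hu1, hP2Wr.trans hWrW, Finset.mem_union_left _ hrP1,
            hrP2, hc1, hcP2, ?_⟩
          rw [hlW, hsig1]; push_neg at h2; linarith
        · refine ⟨P1, P2 ∪ Q2, hP1Wr.trans hWrW, hu2, hrP1,
            Finset.mem_union_left _ hrP2, hcP1, hc2, ?_⟩
          rw [hlW, hsig2]; push_neg at h1; linarith
        · refine ⟨P1, P2, hP1Wr.trans hWrW, hP2Wr.trans hWrW, hrP1, hrP2, hcP1, hcP2, ?_⟩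
          rw [hlW]; push_neg at h1 h2; linarith

lemma conn_subgraph (W : Finset V) (hW : Conn T W) (hne : W.Nonempty) :
    ((⊤ : T.Subgraph).induce ↑W).Connected := by
  rw [SimpleGraph.Subgraph.connected_iff_forall_exists_walk_subgraph]
  constructor
  · obtain ⟨x, hx⟩ := hne
    exact ⟨x, by simpa using hx⟩
  · intro u v hu hv
    simp only [SimpleGraph.Subgraph.induce_verts, Finset.coe_sort_coe, Finset.mem_coe] at hu hv
    obtain ⟨p, hp⟩ := hW u (by simpa using hu) v (by simpa using hv)
    refine ⟨p, ?_, ?_⟩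
    · intro z hz
      rw [SimpleGraph.Walk.mem_verts_toSubgraph] at hz
      simpa using hp z hz
    · intro a b hab
      have haT : T.Adj a b := p.toSubgraph.adj_sub hab
      have haW : a ∈ W := by
        have := p.toSubgraph.edge_vert hab
        rw [SimpleGraph.Walk.mem_verts_toSubgraph] at this
        exact hp a this
      have hbW : b ∈ W := by
        have := p.toSubgraph.edge_vert hab.symm
        rw [SimpleGraph.Walk.mem_verts_toSubgraph] at this
        exact hp b this
      exact ⟨by simpa using haW, by simpa using hbW, haT⟩

lemma edgeSet_induce (W : Finset V) :
    ((⊤ : T.Subgraph).induce ↑W).edgeSet = ↑(T.edgeFinset ∩ W.sym2) := by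
  ext e
  induction e with
  | _ x y =>
    simp only [SimpleGraph.Subgraph.mem_edgeSet, SimpleGraph.Subgraph.induce_adj,
      SimpleGraph.Subgraph.top_adj, Finset.mem_coe, Finset.mem_inter,
      Finset.mk_mem_sym2_iff, SimpleGraph.mem_edgeFinset, SimpleGraph.mem_edgeSet]
    tauto

end TreeDisc


open scoped RealInnerProductSpace

/-- **High-dimensional discrepancy of subtrees, lower bound.**
For every `d ≥ 1` and every finite tree `T` with `ℓ` leaves, every colouring
`f : E(T) → S^d ⊂ ℝ^{d+1}` admits a subtree `S` (connected subgraph) with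
`‖∑_{e ∈ E(S)} f e‖ ≥ ℓ / (d·B(d/2, 1/2))`. -/
theorem highdim_discrepancy_lower_bound
    {V : Type*} [Fintype V] (T : SimpleGraph V) [DecidableRel T.Adj]
    (hT : T.IsTree) (d : ℕ) (hd : 1 ≤ d) (ℓ : ℕ)
    (hℓ : ℓ = ({v : V | T.degree v = 1} : Set V).ncard)
    (f : Sym2 V → Metric.sphere (0 : EuclideanSpace ℝ (Fin (d + 1))) 1) :
    ∃ S : T.Subgraph, S.Connected ∧
      (ℓ : ℝ) / (d * realBeta ((d : ℝ) / 2) (1 / 2)) ≤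
        ‖∑ᶠ e ∈ S.edgeSet, (f e : EuclideanSpace ℝ (Fin (d + 1)))‖ := by
  classical
  have hdR : (0:ℝ) < d := by exact_mod_cast hd
  have hβ : 0 < realBeta ((d:ℝ)/2) (1/2) := by
    rw [realBeta]
    have h1 : 0 < Real.Gamma ((d:ℝ)/2) := Real.Gamma_pos_of_pos (by positivity)
    have h2 : 0 < Real.Gamma ((1:ℝ)/2) := Real.Gamma_pos_of_pos (by norm_num)
    have h3 : 0 < Real.Gamma ((d:ℝ)/2 + 1/2) := Real.Gamma_pos_of_pos (by positivity)
    positivity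
  have hdβ : 0 < (d:ℝ) * realBeta ((d:ℝ)/2) (1/2) := by positivity
  have hℓfin : (ℓ:ℝ) = ((Finset.univ.filter (fun v => T.degree v = 1)).card : ℝ) := by
    rw [hℓ]
    congr 1
    rw [Set.ncard_eq_toFinset_card', Set.toFinset_setOf]
  by_cases hV1 : Fintype.card V ≤ 1
  · -- no edges, no leaves
    have hcV := hT.card_edgeFinset
    have hnedge : T.edgeFinset.card = 0 := by omega
    have hnoadj : ∀ a b : V, ¬ T.Adj a b := by
      intro a b hab
      have hmem : s(a,b) ∈ T.edgeFinset := SimpleGraph.mem_edgeFinset.mpr hab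
      rw [Finset.card_eq_zero] at hnedge
      rw [hnedge] at hmem
      exact absurd hmem (Finset.notMem_empty _)
    have hdeg : ∀ v : V, T.degree v = 0 := by
      intro v
      rw [← SimpleGraph.card_neighborFinset_eq_degree, Finset.card_eq_zero]
      ext u
      simp [SimpleGraph.mem_neighborFinset, hnoadj]
    have hl0 : ℓ = 0 := by
      have hset : {v : V | T.degree v = 1} = ∅ := by
        ext v; simp [hdeg v]
      rw [hℓ, hset, Set.ncard_empty]
    obtain ⟨v0⟩ := hT.isConnected.nonempty
    refine ⟨SimpleGraph.singletonSubgraph T v0, SimpleGraph.Subgraph.singletonSubgraph_connected, ?_⟩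
    rw [SimpleGraph.edgeSet_singletonSubgraph, finsum_mem_empty, hl0]
    simp
  · haveI : Nonempty V := hT.isConnected.nonempty
    have hconnU : TreeDisc.Conn T Finset.univ := by
      intro x _ y _
      obtain ⟨p⟩ := hT.isConnected.preconnected x y
      exact ⟨p, fun z _ => Finset.mem_univ z⟩
    have hdegfilter : ∀ v : V, T.degree v = (Finset.univ.filter (fun u => T.Adj v u)).card := by
      intro v
      rw [← SimpleGraph.card_neighborFinset_eq_degree, SimpleGraph.neighborFinset_eq_filter]
    by_cases hV2 : Fintype.card V = 2
    · -- single edge; take the whole tree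
      have hcV := hT.card_edgeFinset
      have hcard1 : T.edgeFinset.card = 1 := by omega
      obtain ⟨e0, he0⟩ := Finset.card_eq_one.mp hcard1
      refine ⟨(⊤ : T.Subgraph).induce ↑(Finset.univ : Finset V),
        TreeDisc.conn_subgraph T _ hconnU Finset.univ_nonempty, ?_⟩
      have hsum : (∑ᶠ e ∈ ((⊤ : T.Subgraph).induce ↑(Finset.univ : Finset V)).edgeSet,
          (f e : EuclideanSpace ℝ (Fin (d+1))))
          = ∑ e ∈ T.edgeFinset ∩ (Finset.univ : Finset V).sym2,
            (f e : EuclideanSpace ℝ (Fin (d+1))) := by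
        rw [TreeDisc.edgeSet_induce]
        exact finsum_mem_coe_finset _ _
      have hinter : T.edgeFinset ∩ (Finset.univ : Finset V).sym2 = {e0} := by
        rw [← he0]
        ext e
        simp [Finset.mem_sym2_iff]
      rw [hsum, hinter, Finset.sum_singleton]
      have hnorm : ‖(f e0 : EuclideanSpace ℝ (Fin (d+1)))‖ = 1 :=
        mem_sphere_zero_iff_norm.mp (f e0).2
      rw [hnorm]
      have hl2 : (ℓ:ℝ) ≤ 2 := by
        rw [hℓfin]
        have h1 := Finset.card_filter_le Finset.univ (fun v => T.degree v = 1)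
        rw [Finset.card_univ, hV2] at h1
        exact_mod_cast h1
      have hc1 : 2 / ((d:ℝ) * realBeta ((d:ℝ)/2) (1/2)) ≤ 1 := by
        obtain ⟨θ, hθ, hbound⟩ := SphereAvg.exists_good d hd ({0} : Finset (Fin 1))
          (fun _ => EuclideanSpace.single (0 : Fin (d+1)) (1:ℝ)) (fun i _ => by simp)
        have hCS := abs_real_inner_le_norm θ (EuclideanSpace.single (0 : Fin (d+1)) (1:ℝ))
        rw [hθ] at hCS
        simp only [Finset.card_singleton, Nat.cast_one, one_mul, Finset.sum_singleton] at hbound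
        simp only [EuclideanSpace.norm_single, norm_one, one_mul] at hCS
        linarith
      calc (ℓ:ℝ) / ((d:ℝ) * realBeta ((d:ℝ)/2) (1/2))
          ≤ 2 / ((d:ℝ) * realBeta ((d:ℝ)/2) (1/2)) := by gcongr
        _ ≤ 1 := hc1
    · -- main case : at least 3 vertices
      have hex : ∃ r : V, T.degree r ≠ 1 := by
        by_contra hall
        push_neg at hall
        have hsum := T.sum_degrees_eq_twice_card_edges
        have hcV := hT.card_edgeFinset
        rw [Finset.sum_congr rfl (fun v _ => hall v), Finset.sum_const, smul_eq_mul,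
          mul_one, Finset.card_univ] at hsum
        omega
      obtain ⟨r, hrdeg⟩ := hex
      have hdisjbi : ∀ v ∈ Finset.univ.filter (fun v => T.degree v = 1),
          ∀ w ∈ Finset.univ.filter (fun v => T.degree v = 1), v ≠ w →
          Disjoint ((Finset.univ.filter (fun u => T.Adj v u)).image (fun u => (v, u)))
            ((Finset.univ.filter (fun u => T.Adj w u)).image (fun u => (w, u))) := by
        intro v _ w _ hvw
        rw [Finset.disjoint_left]
        rintro ⟨a, b⟩ h1 h2
        rw [Finset.mem_image] at h1 h2
        obtain ⟨u1, _, h1⟩ := h1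
        obtain ⟨u2, _, h2⟩ := h2
        have e1 : v = a := congrArg Prod.fst h1
        have e2 : w = a := congrArg Prod.fst h2
        exact hvw (e1.trans e2.symm)
      have hscard : ((Finset.univ.filter (fun v => T.degree v = 1)).biUnion (fun v =>
          (Finset.univ.filter (fun u => T.Adj v u)).image (fun u => (v, u)))).card
          = (Finset.univ.filter (fun v => T.degree v = 1)).card := by
        rw [Finset.card_biUnion hdisjbi]
        have hone : ∀ v ∈ Finset.univ.filter (fun v => T.degree v = 1),
            ((Finset.univ.filter (fun u => T.Adj v u)).image (fun u => (v, u))).card = 1 := by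
          intro v hv
          rw [Finset.card_image_of_injective _ (fun a b h => by simpa using h), ← hdegfilter v]
          exact (Finset.mem_filter.mp hv).2
        rw [Finset.sum_congr rfl hone, Finset.sum_const, smul_eq_mul, mul_one]
      obtain ⟨θ, hθnorm, hθbound⟩ := SphereAvg.exists_good d hd
        ((Finset.univ.filter (fun v => T.degree v = 1)).biUnion (fun v =>
          (Finset.univ.filter (fun u => T.Adj v u)).image (fun u => (v, u))))
        (fun p => (f s(p.1, p.2) : EuclideanSpace ℝ (Fin (d+1))))
        (fun p _ => mem_sphere_zero_iff_norm.mp (f _).2)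
      have hsum_s : (∑ p ∈ (Finset.univ.filter (fun v => T.degree v = 1)).biUnion (fun v =>
            (Finset.univ.filter (fun u => T.Adj v u)).image (fun u => (v, u))),
            |⟪θ, (f s(p.1, p.2) : EuclideanSpace ℝ (Fin (d+1)))⟫|)
          = ∑ v ∈ Finset.univ.filter (fun v => T.degree v = 1),
              ∑ u ∈ Finset.univ.filter (fun u => T.Adj v u),
                |⟪θ, (f s(v, u) : EuclideanSpace ℝ (Fin (d+1)))⟫| := by
        rw [Finset.sum_biUnion hdisjbi]
        refine Finset.sum_congr rfl fun v _ => ?_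
        rw [Finset.sum_image (fun a _ b _ h => by simpa using h)]
      obtain ⟨W1, W2, hW1U, hW2U, hrW1, hrW2, hc1, hc2, hdiff⟩ :=
        TreeDisc.core T (fun e => ⟪θ, (f e : EuclideanSpace ℝ (Fin (d+1)))⟫) hT.IsAcyclic
          (Fintype.card V) Finset.univ (le_of_eq (Finset.card_univ)) hconnU r (Finset.mem_univ r)
      have hlsum : TreeDisc.lsum T (fun e => ⟪θ, (f e : EuclideanSpace ℝ (Fin (d+1)))⟫)
          Finset.univ r
          = ∑ v ∈ Finset.univ.filter (fun v => T.degree v = 1),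
              ∑ u ∈ Finset.univ.filter (fun u => T.Adj v u),
                |⟪θ, (f s(v, u) : EuclideanSpace ℝ (Fin (d+1)))⟫| := by
        rw [TreeDisc.lsum]
        have hidx : (Finset.univ.erase r).filter
            (fun v => ((Finset.univ : Finset V).filter (fun u => T.Adj v u)).card = 1)
            = Finset.univ.filter (fun v => T.degree v = 1) := by
          ext v
          rw [Finset.mem_filter, Finset.mem_erase, Finset.mem_filter]
          constructor
          · rintro ⟨⟨_, _⟩, hdeg1⟩
            exact ⟨Finset.mem_univ v, by rw [hdegfilter v]; exact hdeg1⟩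
          · rintro ⟨_, hdeg1⟩
            refine ⟨⟨?_, Finset.mem_univ v⟩, by rw [← hdegfilter v]; exact hdeg1⟩
            rintro rfl
            exact hrdeg hdeg1
        rw [hidx]
      have hLbound : (ℓ:ℝ) * (2 / ((d:ℝ) * realBeta ((d:ℝ)/2) (1/2)))
          ≤ TreeDisc.sig T (fun e => ⟪θ, (f e : EuclideanSpace ℝ (Fin (d+1)))⟫) W1
            - TreeDisc.sig T (fun e => ⟪θ, (f e : EuclideanSpace ℝ (Fin (d+1)))⟫) W2 := by
        rw [hℓfin, ← hscard]
        calc (((Finset.univ.filter (fun v => T.degree v = 1)).biUnion (fun v =>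
              (Finset.univ.filter (fun u => T.Adj v u)).image (fun u => (v, u)))).card : ℝ)
              * (2 / ((d:ℝ) * realBeta ((d:ℝ)/2) (1/2)))
            ≤ _ := hθbound
          _ = TreeDisc.lsum T (fun e => ⟪θ, (f e : EuclideanSpace ℝ (Fin (d+1)))⟫)
              Finset.univ r := by rw [hsum_s, ← hlsum]
          _ ≤ _ := hdiff
      have hfinish : ∀ Wx : Finset V, r ∈ Wx → TreeDisc.Conn T Wx →
          ((ℓ:ℝ) / ((d:ℝ) * realBeta ((d:ℝ)/2) (1/2))
            ≤ |TreeDisc.sig T (fun e => ⟪θ, (f e : EuclideanSpace ℝ (Fin (d+1)))⟫) Wx|) →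
          ∃ S : T.Subgraph, S.Connected ∧
            (ℓ : ℝ) / (d * realBeta ((d : ℝ) / 2) (1 / 2)) ≤
              ‖∑ᶠ e ∈ S.edgeSet, (f e : EuclideanSpace ℝ (Fin (d + 1)))‖ := by
        intro Wx hrWx hcWx hb
        refine ⟨(⊤ : T.Subgraph).induce ↑Wx, TreeDisc.conn_subgraph T Wx hcWx ⟨r, hrWx⟩, ?_⟩
        have hsumS : (∑ᶠ e ∈ ((⊤ : T.Subgraph).induce ↑Wx).edgeSet,
            (f e : EuclideanSpace ℝ (Fin (d+1))))
            = ∑ e ∈ T.edgeFinset ∩ Wx.sym2, (f e : EuclideanSpace ℝ (Fin (d+1))) := by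
          rw [TreeDisc.edgeSet_induce]
          exact finsum_mem_coe_finset _ _
        rw [hsumS]
        have hip : ⟪θ, ∑ e ∈ T.edgeFinset ∩ Wx.sym2, (f e : EuclideanSpace ℝ (Fin (d+1)))⟫
            = TreeDisc.sig T (fun e => ⟪θ, (f e : EuclideanSpace ℝ (Fin (d+1)))⟫) Wx := by
          rw [inner_sum]
          rfl
        calc (ℓ:ℝ) / ((d:ℝ) * realBeta ((d:ℝ)/2) (1/2))
            ≤ |TreeDisc.sig T (fun e => ⟪θ, (f e : EuclideanSpace ℝ (Fin (d+1)))⟫) Wx| := hb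
          _ = |⟪θ, ∑ e ∈ T.edgeFinset ∩ Wx.sym2, (f e : EuclideanSpace ℝ (Fin (d+1)))⟫| := by
              rw [hip]
          _ ≤ ‖θ‖ * ‖∑ e ∈ T.edgeFinset ∩ Wx.sym2, (f e : EuclideanSpace ℝ (Fin (d+1)))‖ :=
              abs_real_inner_le_norm _ _
          _ = ‖∑ e ∈ T.edgeFinset ∩ Wx.sym2, (f e : EuclideanSpace ℝ (Fin (d+1)))‖ := by
              rw [hθnorm, one_mul]
      have hid : (ℓ:ℝ) * (2 / ((d:ℝ) * realBeta ((d:ℝ)/2) (1/2)))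
          = 2 * ((ℓ:ℝ) / ((d:ℝ) * realBeta ((d:ℝ)/2) (1/2))) := by ring
      rcases le_total
        |TreeDisc.sig T (fun e => ⟪θ, (f e : EuclideanSpace ℝ (Fin (d+1)))⟫) W2|
        |TreeDisc.sig T (fun e => ⟪θ, (f e : EuclideanSpace ℝ (Fin (d+1)))⟫) W1| with h | h
      · refine hfinish W1 hrW1 hc1 ?_
        have h1 := le_abs_self
          (TreeDisc.sig T (fun e => ⟪θ, (f e : EuclideanSpace ℝ (Fin (d+1)))⟫) W1)
        have h2 := neg_abs_le
          (TreeDisc.sig T (fun e => ⟪θ, (f e : EuclideanSpace ℝ (Fin (d+1)))⟫) W2)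
        linarith
      · refine hfinish W2 hrW2 hc2 ?_
        have h1 := le_abs_self
          (TreeDisc.sig T (fun e => ⟪θ, (f e : EuclideanSpace ℝ (Fin (d+1)))⟫) W1)
        have h2 := neg_abs_le
          (TreeDisc.sig T (fun e => ⟪θ, (f e : EuclideanSpace ℝ (Fin (d+1)))⟫) W2)
        linarith
end

section
/- For every finite tree T with ℓ leaves, the 1-dimensional (complex) discrepancy of the family of all subtrees of T satisfies D^1(T,𝒯) ≥ ℓ/π; that is, for every colouring f : E(T) → S^1 (unit circle in ℝ²) there exists a subtree S of T with ‖Σ_{e∈E(S)} f(e)‖ ≥ ℓ/π. -/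
open SimpleGraph Finset Real

set_option linter.unusedSectionVars false
set_option maxHeartbeats 1000000

namespace TreeDisc

variable {V : Type*} [Fintype V] [DecidableEq V] (T : SimpleGraph V) [DecidableRel T.Adj] (r : V)

/-! ### Rooted tree structure: depth, parent, children -/

noncomputable def dep (v : V) : ℕ := T.dist v r

noncomputable def ch (v : V) : Finset V :=
  (T.neighborFinset v).filter (fun c => dep T r c = dep T r v + 1)

noncomputable def par (v : V) : V :=
  if h : ∃ c, T.Adj v c ∧ dep T r c + 1 = dep T r v then h.choose else v

omit [DecidableEq V] in
lemma mem_ch {v c : V} : c ∈ ch T r v ↔ T.Adj v c ∧ dep T r c = dep T r v + 1 := by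
  simp [ch, mem_filter, mem_neighborFinset]

lemma dep_r : dep T r r = 0 := SimpleGraph.dist_self

lemma dep_pos (hc : T.Connected) {v : V} (hv : v ≠ r) : 0 < dep T r v :=
  hc.pos_dist_of_ne hv

omit [DecidableEq V] in
lemma dep_lt_card [Nonempty V] (v : V) : dep T r v < Fintype.card V := by
  by_cases h : T.Reachable v r
  · obtain ⟨p, hp, hl⟩ := h.exists_path_of_dist
    have := hp.length_lt
    rw [dep, ← hl]; exact this
  · rw [dep, SimpleGraph.dist_eq_zero_of_not_reachable h]; exact Fintype.card_pos

/-- If `v` lies on a shortest path from `c` to `r` and `v ≠ c` then `dep v < dep c`. -/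
lemma dep_lt_of_mem_support {c v : V} (Q : T.Walk c r) (hQ : Q.length = dep T r c)
    (hv : v ∈ Q.support) (hvc : v ≠ c) : dep T r v + 1 ≤ dep T r c := by
  have hspec := Q.take_spec hv
  have hlen : (Q.takeUntil v hv).length + (Q.dropUntil v hv).length = Q.length := by
    rw [← SimpleGraph.Walk.length_append, hspec]
  have h1 : dep T r v ≤ (Q.dropUntil v hv).length := SimpleGraph.dist_le _
  have h2 : 1 ≤ (Q.takeUntil v hv).length := by
    by_contra h
    push_neg at h
    interval_cases h' : (Q.takeUntil v hv).length
    · exact hvc (SimpleGraph.Walk.eq_of_length_eq_zero h').symm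
  omega

/-- Parent uniqueness: any neighbour of `v` that is strictly closer to the root is unique. -/
lemma parent_unique (hT : T.IsTree) {v c₁ c₂ : V}
    (h₁ : T.Adj v c₁) (hd₁ : dep T r c₁ + 1 = dep T r v)
    (h₂ : T.Adj v c₂) (hd₂ : dep T r c₂ + 1 = dep T r v) : c₁ = c₂ := by
  have key : ∀ (c : V) (h : T.Adj v c), dep T r c + 1 = dep T r v →
      ∃ (Q : T.Walk c r), (SimpleGraph.Walk.cons h Q).IsPath ∧
        (SimpleGraph.Walk.cons h Q).length = dep T r v := by
    intro c h hd
    obtain ⟨Q, hQp, hQl⟩ := (hT.isConnected c r).exists_path_of_dist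
    refine ⟨Q, ?_, by simp [SimpleGraph.Walk.length_cons, hQl, ← hd]; rfl⟩
    rw [SimpleGraph.Walk.cons_isPath_iff]
    refine ⟨hQp, fun hmem => ?_⟩
    have := dep_lt_of_mem_support T r Q hQl hmem h.ne
    omega
  obtain ⟨Q₁, hP₁, _⟩ := key c₁ h₁ hd₁
  obtain ⟨Q₂, hP₂, _⟩ := key c₂ h₂ hd₂
  have huniq := hT.existsUnique_path v r
  have heq : SimpleGraph.Walk.cons h₁ Q₁ = SimpleGraph.Walk.cons h₂ Q₂ :=
    (huniq.unique hP₁ hP₂)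
  have : (SimpleGraph.Walk.cons h₁ Q₁).getVert 1 = (SimpleGraph.Walk.cons h₂ Q₂).getVert 1 := by
    rw [heq]
  simpa [SimpleGraph.Walk.getVert_cons _ _ one_ne_zero] using this

/-- In a tree, neighbours differ in depth by exactly one. -/
lemma dep_dichotomy (hT : T.IsTree) {v c : V} (h : T.Adj v c) :
    dep T r c + 1 = dep T r v ∨ dep T r v + 1 = dep T r c := by
  have hne : dep T r c ≠ dep T r v := by
    intro heq
    obtain ⟨Q, hQp, hQl⟩ := (hT.isConnected c r).exists_path_of_dist
    by_cases hmem : v ∈ Q.support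
    · have := dep_lt_of_mem_support T r Q hQl hmem h.ne
      omega
    · have hpath : (SimpleGraph.Walk.cons h Q).IsPath :=
        (SimpleGraph.Walk.cons_isPath_iff h Q).2 ⟨hQp, hmem⟩
      obtain ⟨P, hPp, hPl⟩ := (hT.isConnected v r).exists_path_of_dist
      have := (hT.existsUnique_path v r).unique hpath hPp
      have hlen : (SimpleGraph.Walk.cons h Q).length = P.length := by rw [this]
      rw [SimpleGraph.Walk.length_cons] at hlen
      have : Q.length = dep T r c := hQl
      have : P.length = dep T r v := hPl
      omega
  have h1 : dep T r v ≤ dep T r c + 1 := by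
    obtain ⟨Q, hQl⟩ := (hT.isConnected c r).exists_walk_length_eq_dist
    have := SimpleGraph.dist_le (SimpleGraph.Walk.cons h Q)
    simp only [SimpleGraph.Walk.length_cons, hQl] at this
    simpa [dep] using this
  have h2 : dep T r c ≤ dep T r v + 1 := by
    obtain ⟨Q, hQl⟩ := (hT.isConnected v r).exists_walk_length_eq_dist
    have := SimpleGraph.dist_le (SimpleGraph.Walk.cons h.symm Q)
    simp only [SimpleGraph.Walk.length_cons, hQl] at this
    simpa [dep] using this
  omega

lemma par_spec (hc : T.Connected) {v : V} (hv : v ≠ r) :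
    T.Adj v (par T r v) ∧ dep T r (par T r v) + 1 = dep T r v := by
  have hex : ∃ c, T.Adj v c ∧ dep T r c + 1 = dep T r v := by
    obtain ⟨p, hp, hl⟩ := (hc v r).exists_path_of_dist
    cases p with
    | nil => exact absurd rfl hv
    | @cons _ c _ h q =>
      refine ⟨c, h, ?_⟩
      have h1 : T.dist c r ≤ q.length := SimpleGraph.dist_le q
      have h2 : T.dist v r ≤ T.dist c r + 1 := by
        obtain ⟨q', hq'⟩ := (hc c r).exists_walk_length_eq_dist
        calc T.dist v r ≤ (SimpleGraph.Walk.cons h q').length := SimpleGraph.dist_le _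
        _ = T.dist c r + 1 := by simp [SimpleGraph.Walk.length_cons, hq']
      have h3 : q.length + 1 = T.dist v r := by
        simpa [SimpleGraph.Walk.length_cons] using hl
      simp only [dep]; omega
  rw [par, dif_pos hex]
  exact hex.choose_spec

lemma eq_par (hT : T.IsTree) {v c : V} (hv : v ≠ r) (h : T.Adj v c)
    (hd : dep T r c + 1 = dep T r v) : c = par T r v := by
  obtain ⟨h', hd'⟩ := par_spec T r hT.isConnected hv
  exact parent_unique T r hT h hd h' hd'

lemma par_of_mem_ch (hT : T.IsTree) {v c : V} (hc : c ∈ ch T r v) :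
    par T r c = v ∧ c ≠ r := by
  rw [mem_ch] at hc
  have hcr : c ≠ r := by
    intro h; subst h; rw [dep_r] at hc; omega
  exact ⟨(eq_par T r hT hcr hc.1.symm (by omega)).symm, hcr⟩

lemma neighborFinset_eq (hT : T.IsTree) {v : V} (hv : v ≠ r) :
    T.neighborFinset v = insert (par T r v) (ch T r v) ∧ par T r v ∉ ch T r v := by
  obtain ⟨hadj, hdep⟩ := par_spec T r hT.isConnected hv
  constructor
  · ext c
    simp only [mem_neighborFinset, mem_insert, mem_ch]
    constructor
    · intro h
      rcases dep_dichotomy T r hT h with hd | hd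
      · exact Or.inl (eq_par T r hT hv h hd)
      · exact Or.inr ⟨h, hd.symm⟩
    · rintro (rfl | ⟨h, _⟩)
      · exact hadj
      · exact h
  · rw [mem_ch]; rintro ⟨-, hd⟩; omega

lemma degree_eq (hT : T.IsTree) {v : V} (hv : v ≠ r) :
    T.degree v = (ch T r v).card + 1 := by
  obtain ⟨he, hn⟩ := neighborFinset_eq T r hT hv
  rw [SimpleGraph.degree, he, Finset.card_insert_of_notMem hn]

lemma ch_r (hT : T.IsTree) : ch T r r = T.neighborFinset r := by
  ext c
  simp only [mem_ch, mem_neighborFinset]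
  refine ⟨fun h => h.1, fun h => ⟨h, ?_⟩⟩
  rcases dep_dichotomy T r hT h with hd | hd
  · rw [dep_r] at hd; omega
  · rw [dep_r] at hd ⊢; omega

/-! ### Induced subgraphs of finite vertex sets -/

/-- The subgraph of `T` induced by a finite vertex set `U`. -/
def indSub (U : Finset V) : T.Subgraph where
  verts := ↑U
  Adj a b := T.Adj a b ∧ a ∈ U ∧ b ∈ U
  adj_sub h := h.1
  edge_vert h := h.2.1
  symm := ⟨fun a b h => ⟨h.1.symm, h.2.2, h.2.1⟩⟩

lemma indSub_connected (hT : T.IsTree) (U : Finset V) (hrU : r ∈ U)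
    (hcl : ∀ u ∈ U, u ≠ r → par T r u ∈ U) : (indSub T U).Connected := by
  rw [SimpleGraph.Subgraph.connected_iff]
  constructor
  · constructor
    intro a b
    have aux : ∀ (n : ℕ) (a : V) (ha : a ∈ (indSub T U).verts),
        dep T r a ≤ n → (indSub T U).coe.Reachable ⟨a, ha⟩ ⟨r, by exact hrU⟩ := by
      intro n
      induction n with
      | zero =>
        intro a ha h0
        have : a = r := by
          by_contra hne
          have := dep_pos T r hT.isConnected hne
          omega
        subst this
        rfl
      | succ n ih =>
        intro a ha h
        by_cases hne : a = r
        · subst hne; rfl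
        · have haU : a ∈ U := ha
          have hpU : par T r a ∈ U := hcl a haU hne
          obtain ⟨hadj, hdep⟩ := par_spec T r hT.isConnected hne
          have hadj' : (indSub T U).coe.Adj ⟨a, ha⟩ ⟨par T r a, hpU⟩ := by
            simp only [SimpleGraph.Subgraph.coe_adj]
            exact ⟨hadj, haU, hpU⟩
          exact hadj'.reachable.trans (ih (par T r a) hpU (by omega))
    exact (aux _ a.1 a.2 le_rfl).trans (aux _ b.1 b.2 le_rfl).symm
  · exact ⟨r, hrU⟩

lemma indSub_sum {M : Type*} [AddCommMonoid M] (hT : T.IsTree) (U : Finset V)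
    (hrU : r ∈ U) (hcl : ∀ u ∈ U, u ≠ r → par T r u ∈ U) (g : Sym2 V → M) :
    ∑ᶠ e ∈ (indSub T U).edgeSet, g e = ∑ u ∈ U.erase r, g s(u, par T r u) := by
  classical
  have hset : (indSub T U).edgeSet = ↑((U.erase r).image (fun u => s(u, par T r u))) := by
    apply Set.eq_of_subset_of_subset
    · intro e he
      induction e using Sym2.ind with
      | _ a b =>
        rw [SimpleGraph.Subgraph.mem_edgeSet] at he
        obtain ⟨hadj, haU, hbU⟩ := he
        simp only [Finset.coe_image, Set.mem_image, Finset.mem_coe, Finset.mem_erase]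
        rcases dep_dichotomy T r hT hadj with hd | hd
        · have har : a ≠ r := by
            intro h; subst h; rw [dep_r] at hd; omega
          refine ⟨a, ⟨har, haU⟩, ?_⟩
          rw [← eq_par T r hT har hadj hd, Sym2.eq_swap]
        · have hbr : b ≠ r := by
            intro h; subst h; rw [dep_r] at hd; omega
          refine ⟨b, ⟨hbr, hbU⟩, ?_⟩
          rw [← eq_par T r hT hbr hadj.symm hd]
          exact Sym2.eq_swap
    · intro e he
      simp only [Finset.coe_image, Set.mem_image, Finset.mem_coe, Finset.mem_erase] at he
      obtain ⟨u, ⟨hur, huU⟩, rfl⟩ := he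
      rw [SimpleGraph.Subgraph.mem_edgeSet]
      exact ⟨(par_spec T r hT.isConnected hur).1, huU, hcl u huU hur⟩
  rw [hset, finsum_mem_coe_finset]
  apply Finset.sum_image
  intro u hu u' hu' heq
  rw [Finset.mem_coe, Finset.mem_erase] at hu hu'
  rw [Sym2.eq_iff] at heq
  rcases heq with ⟨rfl, -⟩ | ⟨h1, h2⟩
  · rfl
  · have d1 := (par_spec T r hT.isConnected hu.1).2
    have d2 := (par_spec T r hT.isConnected hu'.1).2
    rw [← h1] at d2
    rw [h2] at d1
    omega

/-! ### The greedy gains and selected subtrees -/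

section Rec

variable [Nonempty V]

noncomputable def gg [Nonempty V] (w : Sym2 V → ℝ) (v : V) : ℝ :=
  ∑ c ∈ (ch T r v).attach, max 0 (w s(v, c.1) + gg w c.1)
termination_by Fintype.card V - dep T r v
decreasing_by
  have hc := (mem_ch T r).1 c.2
  have := dep_lt_card T r v
  omega

noncomputable def desc [Nonempty V] (v : V) : Finset V :=
  {v} ∪ (ch T r v).attach.biUnion (fun c => desc c.1)
termination_by Fintype.card V - dep T r v
decreasing_by
  have hc := (mem_ch T r).1 c.2
  have := dep_lt_card T r v
  omega

noncomputable def sel [Nonempty V] (w : Sym2 V → ℝ) (v : V) : Finset V :=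
  {v} ∪ ((ch T r v).attach.filter (fun c => 0 ≤ w s(v, c.1) + gg T r w c.1)).biUnion
      (fun c => sel w c.1)
termination_by Fintype.card V - dep T r v
decreasing_by
  have hc := (mem_ch T r).1 c.2
  have := dep_lt_card T r v
  omega

lemma gg_nonneg (w : Sym2 V → ℝ) (v : V) : 0 ≤ gg T r w v := by
  rw [gg]
  exact Finset.sum_nonneg fun c _ => le_max_left _ _

lemma gg_of_ch_empty (w : Sym2 V → ℝ) {v : V} (h : ch T r v = ∅) : gg T r w v = 0 := by
  rw [gg, h]; simp

lemma mem_desc_self (v : V) : v ∈ desc T r v := by rw [desc]; simp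

lemma mem_sel_self (w : Sym2 V → ℝ) (v : V) : v ∈ sel T r w v := by rw [sel]; simp

lemma desc_of_ch_empty {v : V} (h : ch T r v = ∅) : desc T r v = {v} := by rw [desc, h]; simp

lemma desc_subset {v c : V} (hc : c ∈ ch T r v) : desc T r c ⊆ desc T r v := by
  intro u hu
  rw [desc]
  simp only [Finset.mem_union, Finset.mem_singleton, Finset.mem_biUnion]
  exact Or.inr ⟨⟨c, hc⟩, Finset.mem_attach _ _, hu⟩

lemma dep_le_of_mem_desc {v u : V} (hu : u ∈ desc T r v) : dep T r v ≤ dep T r u := by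
  rw [desc] at hu
  simp only [Finset.mem_union, Finset.mem_singleton, Finset.mem_biUnion] at hu
  rcases hu with rfl | ⟨c, -, hu⟩
  · exact le_refl _
  · have hc := (mem_ch T r).1 c.2
    have := dep_le_of_mem_desc hu
    omega
termination_by Fintype.card V - dep T r v
decreasing_by
  have hc := (mem_ch T r).1 c.2
  have := dep_lt_card T r v
  omega

lemma sel_subset_desc (w : Sym2 V → ℝ) (v : V) : sel T r w v ⊆ desc T r v := by
  rw [sel, desc]
  intro u hu
  simp only [Finset.mem_union, Finset.mem_singleton, Finset.mem_biUnion,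
    Finset.mem_filter] at hu ⊢
  rcases hu with rfl | ⟨c, ⟨-, -⟩, hu⟩
  · exact Or.inl rfl
  · exact Or.inr ⟨c, Finset.mem_attach _ _, sel_subset_desc w c.1 hu⟩
termination_by Fintype.card V - dep T r v
decreasing_by
  have hc := (mem_ch T r).1 c.2
  have := dep_lt_card T r v
  omega

lemma par_iterate_of_mem_desc (hT : T.IsTree) {v u : V} (hu : u ∈ desc T r v) :
    (par T r)^[dep T r u - dep T r v] u = v := by
  rw [desc] at hu
  simp only [Finset.mem_union, Finset.mem_singleton, Finset.mem_biUnion] at hu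
  rcases hu with rfl | ⟨c, -, hu⟩
  · simp
  · have hc := (mem_ch T r).1 c.2
    have hdep := dep_le_of_mem_desc T r hu
    have hrec := par_iterate_of_mem_desc hT hu
    have hpc := (par_of_mem_ch T r hT c.2).1
    have hk : dep T r u - dep T r v = (dep T r u - dep T r c.1) + 1 := by omega
    rw [hk, Function.iterate_succ_apply', hrec, hpc]
termination_by Fintype.card V - dep T r v
decreasing_by
  have hc := (mem_ch T r).1 c.2
  have := dep_lt_card T r v
  omega

lemma desc_disjoint (hT : T.IsTree) {v : V} {c₁ c₂ : V} (h₁ : c₁ ∈ ch T r v)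
    (h₂ : c₂ ∈ ch T r v) (hne : c₁ ≠ c₂) : Disjoint (desc T r c₁) (desc T r c₂) := by
  rw [Finset.disjoint_left]
  intro u hu₁ hu₂
  have e₁ := par_iterate_of_mem_desc T r hT hu₁
  have e₂ := par_iterate_of_mem_desc T r hT hu₂
  have hd : dep T r c₁ = dep T r c₂ := by
    rw [(mem_ch T r).1 h₁ |>.2, (mem_ch T r).1 h₂ |>.2]
  rw [hd] at e₁
  exact hne (e₁ ▸ e₂)

/-- Splitting a sum over `desc v`. -/
lemma sum_desc (hT : T.IsTree) (F : V → ℝ) (v : V) :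
    ∑ u ∈ desc T r v, F u = F v + ∑ c ∈ (ch T r v).attach, ∑ u ∈ desc T r c.1, F u := by
  rw [desc]
  rw [Finset.sum_union, Finset.sum_biUnion]
  · simp
  · intro c₁ h₁ c₂ h₂ hne
    exact desc_disjoint T r hT c₁.2 c₂.2 (fun h => hne (Subtype.ext h))
  · rw [Finset.disjoint_left]
    intro u hu hu'
    simp only [Finset.mem_singleton] at hu
    subst hu
    simp only [Finset.mem_biUnion] at hu'
    obtain ⟨c, -, hu'⟩ := hu'
    have := dep_le_of_mem_desc T r hu'
    have hc := (mem_ch T r).1 c.2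
    omega

/-- The selected set is closed under parents. -/
lemma sel_parent_closed (hT : T.IsTree) (w : Sym2 V → ℝ) (v : V) :
    ∀ u ∈ sel T r w v, u ≠ v → par T r u ∈ sel T r w v := by
  intro u hu hne
  rw [sel] at hu
  simp only [Finset.mem_union, Finset.mem_singleton, Finset.mem_biUnion,
    Finset.mem_filter] at hu
  rcases hu with rfl | ⟨c, ⟨-, hcw⟩, hu⟩
  · exact absurd rfl hne
  · have hsub : sel T r w c.1 ⊆ sel T r w v := by
      intro x hx
      rw [sel]
      simp only [Finset.mem_union, Finset.mem_singleton, Finset.mem_biUnion, Finset.mem_filter]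
      exact Or.inr ⟨c, ⟨Finset.mem_attach _ _, hcw⟩, hx⟩
    by_cases huc : u = c.1
    · subst huc
      have := (par_of_mem_ch T r hT c.2).1
      rw [this]
      exact mem_sel_self T r w v
    · exact hsub (sel_parent_closed hT w c.1 u hu huc)
termination_by Fintype.card V - dep T r v
decreasing_by
  have hc := (mem_ch T r).1 c.2
  have := dep_lt_card T r v
  omega

lemma sel_erase_eq (w : Sym2 V → ℝ) (v : V) :
    (sel T r w v).erase v =
      ((ch T r v).attach.filter (fun c => 0 ≤ w s(v, c.1) + gg T r w c.1)).biUnion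
        (fun c => sel T r w c.1) := by
  conv_lhs => rw [sel]
  rw [Finset.erase_union_distrib, Finset.erase_singleton, Finset.empty_union,
    Finset.erase_eq_of_notMem]
  intro hv
  simp only [Finset.mem_biUnion, Finset.mem_filter] at hv
  obtain ⟨c, ⟨-, -⟩, hv⟩ := hv
  have h1 := dep_le_of_mem_desc T r (sel_subset_desc T r w c.1 hv)
  have hc := (mem_ch T r).1 c.2
  omega

/-- The weight of the selected subtree equals `gg`. -/
lemma sum_sel (hT : T.IsTree) (w : Sym2 V → ℝ) (v : V) :
    ∑ u ∈ (sel T r w v).erase v, w s(u, par T r u) = gg T r w v := by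
  rw [sel_erase_eq, Finset.sum_biUnion]
  · have hterm : ∀ c ∈ (ch T r v).attach.filter
        (fun c => 0 ≤ w s(v, c.1) + gg T r w c.1),
        ∑ u ∈ sel T r w c.1, w s(u, par T r u) = w s(v, c.1) + gg T r w c.1 := by
      intro c hc
      rw [← Finset.add_sum_erase _ _ (mem_sel_self T r w c.1)]
      rw [sum_sel hT w c.1, (par_of_mem_ch T r hT c.2).1, Sym2.eq_swap]
    rw [Finset.sum_congr rfl hterm, Finset.sum_filter]
    conv_rhs => rw [gg]
    apply Finset.sum_congr rfl
    intro c _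
    rcases le_or_gt 0 (w s(v, c.1) + gg T r w c.1) with h | h
    · rw [if_pos h, max_eq_right h]
    · rw [if_neg (not_le.2 h), max_eq_left h.le]
  · intro c₁ h₁ c₂ h₂ hne
    have hd := desc_disjoint T r hT c₁.2 c₂.2 (fun h => hne (Subtype.ext h))
    exact hd.mono (sel_subset_desc T r w c₁.1) (sel_subset_desc T r w c₂.1)
termination_by Fintype.card V - dep T r v
decreasing_by
  have hc := (mem_ch T r).1 c.2
  have := dep_lt_card T r v
  omega

/-- The key inequality: the two one-sided greedy gains dominate the leaf weights below. -/
lemma key_ineq (hT : T.IsTree) (w : Sym2 V → ℝ) (v : V) :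
    (∑ u ∈ desc T r v, (if ch T r u = ∅ then |w s(u, par T r u)| else 0))
      - (if ch T r v = ∅ then |w s(v, par T r v)| else 0)
    ≤ gg T r w v + gg T r (fun e => -w e) v := by
  rw [sum_desc T r hT, add_sub_cancel_left]
  conv_rhs => rw [gg, gg, ← Finset.sum_add_distrib]
  apply Finset.sum_le_sum
  intro c _
  have hpc := (par_of_mem_ch T r hT c.2).1
  by_cases hce : ch T r c.1 = ∅
  · rw [desc_of_ch_empty T r hce, Finset.sum_singleton, if_pos hce, hpc, Sym2.eq_swap,
      gg_of_ch_empty T r w hce, gg_of_ch_empty T r _ hce, add_zero, add_zero]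
    rcases le_total 0 (w s(v, c.1)) with h | h
    · rw [abs_of_nonneg h]
      calc w s(v, c.1) ≤ max 0 (w s(v, c.1)) := le_max_right _ _
      _ ≤ _ := le_add_of_le_of_nonneg le_rfl (le_max_left _ _)
    · rw [abs_of_nonpos h]
      calc -w s(v, c.1) ≤ max 0 (-w s(v, c.1)) := le_max_right _ _
      _ ≤ _ := le_add_of_nonneg_of_le (le_max_left _ _) le_rfl
  · have ih := key_ineq hT w c.1
    rw [if_neg hce, sub_zero] at ih
    refine ih.trans ?_
    calc gg T r w c.1 + gg T r (fun e => -w e) c.1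
        = (w s(v, c.1) + gg T r w c.1) + (-w s(v, c.1) + gg T r (fun e => -w e) c.1) := by ring
      _ ≤ _ := add_le_add (le_max_right _ _) (le_max_right _ _)
termination_by Fintype.card V - dep T r v
decreasing_by
  have hc := (mem_ch T r).1 c.2
  have := dep_lt_card T r v
  omega

lemma ch_mem_desc (hT : T.IsTree) {t x c : V} (hx : x ∈ desc T r t) (hc : c ∈ ch T r x) :
    c ∈ desc T r t := by
  rw [desc] at hx
  simp only [Finset.mem_union, Finset.mem_singleton, Finset.mem_biUnion] at hx
  rcases hx with rfl | ⟨c', -, hx⟩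
  · exact desc_subset T r hc (mem_desc_self T r c)
  · exact desc_subset T r c'.2 (ch_mem_desc hT hx hc)
termination_by Fintype.card V - dep T r t
decreasing_by
  have hc' := (mem_ch T r).1 c'.2
  have := dep_lt_card T r t
  omega

lemma mem_desc_r (hT : T.IsTree) (u : V) : u ∈ desc T r r := by
  by_cases h : u = r
  · subst h; exact mem_desc_self _ _ _
  · obtain ⟨hadj, hdep⟩ := par_spec T r hT.isConnected h
    have hrec : par T r u ∈ desc T r r := mem_desc_r hT (par T r u)
    have hch : u ∈ ch T r (par T r u) := (mem_ch T r).2 ⟨hadj.symm, by omega⟩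
    exact ch_mem_desc T r hT hrec hch
termination_by dep T r u
decreasing_by omega

lemma desc_r_eq_univ (hT : T.IsTree) : desc T r r = Finset.univ :=
  Finset.eq_univ_iff_forall.2 (mem_desc_r T r hT)

end Rec

/-! ### Analysis: averaging over the circle -/

lemma integral_abs_cos : ∫ θ in (0:ℝ)..(2*π), |Real.cos θ| = 4 := by
  have h1 : ∫ θ in (0:ℝ)..(π/2), |Real.cos θ| = 1 := by
    rw [intervalIntegral.integral_congr (g := Real.cos)]
    · rw [integral_cos]; simp
    · intro x hx
      rw [Set.uIcc_of_le (by positivity)] at hx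
      exact abs_of_nonneg (Real.cos_nonneg_of_mem_Icc ⟨by linarith [hx.1, Real.pi_pos], hx.2⟩)
  have h2 : ∫ θ in (π/2)..(3*π/2), |Real.cos θ| = 2 := by
    rw [intervalIntegral.integral_congr (g := fun x => -Real.cos x)]
    · rw [intervalIntegral.integral_neg, integral_cos]
      have : (3:ℝ)*π/2 = π + π/2 := by ring
      rw [this, Real.sin_pi_div_two, Real.sin_add, Real.sin_pi, Real.cos_pi]
      ring_nf
      rw [show π * (1/2) = π/2 by ring, Real.sin_pi_div_two]
      norm_num
    · intro x hx
      have hple : π/2 ≤ 3*π/2 := by linarith [Real.pi_pos]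
      rw [Set.uIcc_of_le hple] at hx
      have : Real.cos x ≤ 0 := by
        apply Real.cos_nonpos_of_pi_div_two_le_of_le hx.1
        linarith [hx.2, Real.pi_pos]
      simp [abs_of_nonpos this]
  have h3 : ∫ θ in (3*π/2)..(2*π), |Real.cos θ| = 1 := by
    rw [intervalIntegral.integral_congr (g := Real.cos)]
    · rw [integral_cos]
      have : (3:ℝ)*π/2 = π + π/2 := by ring
      rw [this, Real.sin_add, Real.sin_pi, Real.cos_pi, Real.sin_two_pi]
      ring_nf
      rw [show π * (1/2) = π/2 by ring, Real.sin_pi_div_two]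
    · intro x hx
      have hple : 3*π/2 ≤ 2*π := by linarith [Real.pi_pos]
      rw [Set.uIcc_of_le hple] at hx
      apply abs_of_nonneg
      have := Real.cos_nonneg_of_mem_Icc (x := x - 2*π)
        ⟨by linarith [hx.1], by linarith [hx.2, Real.pi_pos]⟩
      rwa [Real.cos_sub_two_pi] at this
  have hint : ∀ a b : ℝ, IntervalIntegrable (fun θ => |Real.cos θ|) MeasureTheory.volume a b :=
    fun a b => (continuous_abs.comp Real.continuous_cos).intervalIntegrable a b
  have e1 := intervalIntegral.integral_add_adjacent_intervals (hint 0 (π/2)) (hint (π/2) (3*π/2))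
  have e2 := intervalIntegral.integral_add_adjacent_intervals (hint 0 (3*π/2)) (hint (3*π/2) (2*π))
  rw [← e2, ← e1, h1, h2, h3]
  norm_num

lemma integral_abs_cos_sin {a b : ℝ} (hab : a^2 + b^2 = 1) :
    ∫ θ in (0:ℝ)..(2*π), |a * Real.cos θ + b * Real.sin θ| = 4 := by
  set z : ℂ := ⟨a, b⟩ with hz
  have hzne : z ≠ 0 := by
    intro h
    rw [Complex.ext_iff] at h
    simp [hz] at h
    rw [h.1, h.2] at hab
    norm_num at hab
  have habs : ‖z‖ = 1 := by
    rw [Complex.norm_def, Complex.normSq_mk]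
    rw [show a*a + b*b = 1 by nlinarith]
    exact Real.sqrt_one
  have hca : Real.cos z.arg = a := by rw [Complex.cos_arg hzne, habs]; simp [hz]
  have hsa : Real.sin z.arg = b := by rw [Complex.sin_arg, habs]; simp [hz]
  have heq : ∀ θ : ℝ, a * Real.cos θ + b * Real.sin θ = Real.cos (θ - z.arg) := by
    intro θ
    rw [Real.cos_sub, ← hca, ← hsa]
    ring
  rw [intervalIntegral.integral_congr (g := fun θ => |Real.cos (θ - z.arg)|)
    (fun x _ => by rw [heq x])]
  rw [intervalIntegral.integral_comp_sub_right (fun x => |Real.cos x|) z.arg]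
  have hper : Function.Periodic (fun x => |Real.cos x|) (2*π) :=
    fun x => by simp [Real.cos_periodic x]
  have := hper.intervalIntegral_add_eq (0 - z.arg) 0
  simp only [zero_add] at this
  rw [show (2*π - z.arg) = (0 - z.arg) + 2*π by ring, this, integral_abs_cos]

noncomputable def uvec (θ : ℝ) : EuclideanSpace ℝ (Fin 2) :=
  (WithLp.equiv 2 _).symm ![Real.cos θ, Real.sin θ]

lemma uvec_norm (θ : ℝ) : ‖uvec θ‖ = 1 := by
  rw [EuclideanSpace.norm_eq]
  simp only [uvec, WithLp.equiv_symm_apply, PiLp.toLp_apply]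
  rw [Fin.sum_univ_two]
  simp only [Matrix.cons_val_zero, Matrix.cons_val_one, Matrix.head_cons]
  rw [show ‖Real.cos θ‖^2 + ‖Real.sin θ‖^2 = Real.cos θ^2 + Real.sin θ^2 by
    rw [Real.norm_eq_abs, Real.norm_eq_abs, sq_abs, sq_abs]]
  rw [Real.cos_sq_add_sin_sq, Real.sqrt_one]

lemma inner_uvec (x : EuclideanSpace ℝ (Fin 2)) (θ : ℝ) :
    inner ℝ x (uvec θ) = x 0 * Real.cos θ + x 1 * Real.sin θ := by
  rw [PiLp.inner_apply, Fin.sum_univ_two]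
  simp only [uvec, WithLp.equiv_symm_apply, PiLp.toLp_apply, Matrix.cons_val_zero, Matrix.cons_val_one,
    Matrix.head_cons, RCLike.inner_apply, starRingEnd_apply, star_trivial]
  ring

lemma coord_sq_sum {x : EuclideanSpace ℝ (Fin 2)} (hx : ‖x‖ = 1) :
    (x 0)^2 + (x 1)^2 = 1 := by
  have := EuclideanSpace.norm_eq x
  rw [hx, Fin.sum_univ_two, Real.norm_eq_abs, Real.norm_eq_abs, sq_abs, sq_abs] at this
  have h := this.symm
  rw [show (1:ℝ) = Real.sqrt 1 from Real.sqrt_one.symm] at h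
  have hnn : (0:ℝ) ≤ (x 0)^2 + (x 1)^2 := by positivity
  nlinarith [Real.sq_sqrt hnn, Real.sqrt_one, this]

lemma integral_abs_inner_uvec {x : EuclideanSpace ℝ (Fin 2)} (hx : ‖x‖ = 1) :
    ∫ θ in (0:ℝ)..(2*π), |(inner ℝ x (uvec θ) : ℝ)| = 4 := by
  rw [intervalIntegral.integral_congr
    (g := fun θ => |x 0 * Real.cos θ + x 1 * Real.sin θ|) (fun θ _ => by rw [inner_uvec])]
  exact integral_abs_cos_sin (coord_sq_sum hx)

/-- Averaging over the circle: some direction sees total leaf weight at least `2n/π`. -/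
lemma exists_direction {ι : Type*} (s : Finset ι) (x : ι → EuclideanSpace ℝ (Fin 2))
    (hx : ∀ i ∈ s, ‖x i‖ = 1) :
    ∃ θ : ℝ, 2 * s.card / π ≤ ∑ i ∈ s, |(inner ℝ (x i) (uvec θ) : ℝ)| := by
  set F : ℝ → ℝ := fun θ => ∑ i ∈ s, |(inner ℝ (x i) (uvec θ) : ℝ)| with hF
  have hFc : Continuous F := by
    have : F = fun θ => ∑ i ∈ s, |x i 0 * Real.cos θ + x i 1 * Real.sin θ| := by
      funext θ
      exact Finset.sum_congr rfl fun i _ => by rw [inner_uvec]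
    rw [this]
    apply continuous_finset_sum
    intro i _
    exact ((continuous_const.mul Real.continuous_cos).add
      (continuous_const.mul Real.continuous_sin)).abs
  have h2pi : (0:ℝ) ≤ 2*π := by positivity
  obtain ⟨θ₀, -, hmax⟩ := isCompact_Icc.exists_isMaxOn (Set.nonempty_Icc.2 h2pi)
    hFc.continuousOn
  refine ⟨θ₀, ?_⟩
  have hint : ∫ θ in (0:ℝ)..(2*π), F θ = 4 * s.card := by
    rw [hF]
    rw [intervalIntegral.integral_finset_sum]
    · rw [Finset.sum_congr rfl fun i hi => integral_abs_inner_uvec (hx i hi)]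
      rw [Finset.sum_const, nsmul_eq_mul]
      ring
    · intro i _
      have : (fun θ => |(inner ℝ (x i) (uvec θ) : ℝ)|)
          = fun θ => |x i 0 * Real.cos θ + x i 1 * Real.sin θ| := by
        funext θ; rw [inner_uvec]
      rw [this]
      exact (((continuous_const.mul Real.continuous_cos).add
        (continuous_const.mul Real.continuous_sin)).abs).intervalIntegrable _ _
  have hle : ∫ θ in (0:ℝ)..(2*π), F θ ≤ ∫ _ in (0:ℝ)..(2*π), F θ₀ := by
    apply intervalIntegral.integral_mono_on h2pi (hFc.intervalIntegrable _ _)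
      (intervalIntegrable_const)
    intro θ hθ
    exact hmax hθ
  rw [hint, intervalIntegral.integral_const, smul_eq_mul] at hle
  have hpi := Real.pi_pos
  rw [div_le_iff₀ hpi]
  nlinarith [hle]

/-! ### Bridging leaves and children -/

section Bridge

variable [Nonempty V]

lemma leaf_filter_eq (hT : T.IsTree) (hr : 2 ≤ T.degree r) :
    Finset.univ.filter (fun u => T.degree u = 1)
      = Finset.univ.filter (fun u => ch T r u = ∅) := by
  ext u
  simp only [Finset.mem_filter, Finset.mem_univ, true_and]
  by_cases hur : u = r
  · subst hur
    constructor
    · intro h; omega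
    · intro h
      rw [ch_r T u hT] at h
      rw [SimpleGraph.degree, h] at hr
      simp at hr
  · rw [degree_eq T r hT hur]
    constructor
    · intro h
      have : (ch T r u).card = 0 := by omega
      exact Finset.card_eq_zero.1 this
    · intro h; rw [h]; simp

lemma gg_pair (hT : T.IsTree) (hr : 2 ≤ T.degree r) (w : Sym2 V → ℝ) :
    ∑ u ∈ Finset.univ.filter (fun u => T.degree u = 1), |w s(u, par T r u)|
      ≤ gg T r w r + gg T r (fun e => -w e) r := by
  have hk := key_ineq T r hT w r
  rw [desc_r_eq_univ T r hT] at hk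
  have hchr : ¬(ch T r r = ∅) := by
    intro h
    rw [ch_r T r hT] at h
    rw [SimpleGraph.degree, h] at hr
    simp at hr
  rw [if_neg hchr, sub_zero] at hk
  refine le_trans ?_ hk
  rw [leaf_filter_eq T r hT hr, ← Finset.sum_filter]

end Bridge

end TreeDisc

open TreeDisc

/-- **Complex (1-dimensional) discrepancy of subtrees, lower bound.**
For every finite tree `T` with `ℓ` leaves, every colouring `f : E(T) → S^1 ⊂ ℝ²` admits a
subtree `S` (connected subgraph) with `‖∑_{e ∈ E(S)} f e‖ ≥ ℓ/π`. -/
theorem complex_discrepancy_lower_bound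
    {V : Type*} [Fintype V] (T : SimpleGraph V) [DecidableRel T.Adj]
    (hT : T.IsTree) (ℓ : ℕ)
    (hℓ : ℓ = ({v : V | T.degree v = 1} : Set V).ncard)
    (f : Sym2 V → Metric.sphere (0 : EuclideanSpace ℝ (Fin 2)) 1) :
    ∃ S : T.Subgraph, S.Connected ∧
      (ℓ : ℝ) / Real.pi ≤
        ‖∑ᶠ e ∈ S.edgeSet, (f e : EuclideanSpace ℝ (Fin 2))‖ := by
  classical
  haveI : Nonempty V := hT.isConnected.nonempty
  have hπ := Real.pi_pos
  have hπ3 := Real.pi_gt_three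
  have hfe : ∀ e, ‖(f e : EuclideanSpace ℝ (Fin 2))‖ = 1 := by
    intro e
    have := (f e).2
    rwa [mem_sphere_iff_norm, sub_zero] at this
  by_cases hbig : ∃ r : V, 2 ≤ T.degree r
  · obtain ⟨r, hr⟩ := hbig
    set leaves := Finset.univ.filter (fun u => T.degree u = 1) with hleaves
    have hlcard : (ℓ : ℝ) = leaves.card := by
      rw [hℓ]
      congr 1
      rw [show ({v : V | T.degree v = 1} : Set V) = ↑leaves by ext v; simp [hleaves]]
      rw [Set.ncard_coe_finset]
    obtain ⟨θ₀, hθ₀⟩ := exists_direction leaves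
      (fun u => (f s(u, par T r u) : EuclideanSpace ℝ (Fin 2))) (fun u _ => hfe _)
    set w : Sym2 V → ℝ := fun e => inner ℝ (f e : EuclideanSpace ℝ (Fin 2)) (uvec θ₀) with hw
    have hsum := gg_pair T r hT hr w
    have hFw : ∑ u ∈ leaves, |w s(u, par T r u)|
        = ∑ u ∈ leaves, |(inner ℝ ((f s(u, par T r u) : EuclideanSpace ℝ (Fin 2))) (uvec θ₀) : ℝ)| :=
      rfl
    set Up := sel T r w r with hUp
    set Um := sel T r (fun e => -w e) r with hUm
    set Sp := indSub T Up with hSp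
    set Sm := indSub T Um with hSm
    have hSpc : Sp.Connected := indSub_connected T r hT Up (mem_sel_self T r w r)
      (sel_parent_closed T r hT w r)
    have hSmc : Sm.Connected := indSub_connected T r hT Um (mem_sel_self T r _ r)
      (sel_parent_closed T r hT _ r)
    set A : EuclideanSpace ℝ (Fin 2) := ∑ᶠ e ∈ Sp.edgeSet, (f e : EuclideanSpace ℝ (Fin 2))
      with hA
    set B : EuclideanSpace ℝ (Fin 2) := ∑ᶠ e ∈ Sm.edgeSet, (f e : EuclideanSpace ℝ (Fin 2))
      with hB
    have hAsum : A = ∑ u ∈ Up.erase r, (f s(u, par T r u) : EuclideanSpace ℝ (Fin 2)) :=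
      indSub_sum T r hT Up (mem_sel_self T r w r) (sel_parent_closed T r hT w r) _
    have hBsum : B = ∑ u ∈ Um.erase r, (f s(u, par T r u) : EuclideanSpace ℝ (Fin 2)) :=
      indSub_sum T r hT Um (mem_sel_self T r _ r) (sel_parent_closed T r hT _ r) _
    have hipA : (inner ℝ A (uvec θ₀) : ℝ) = gg T r w r := by
      rw [hAsum, sum_inner, ← sum_sel T r hT w r]
    have hipB : (inner ℝ B (uvec θ₀) : ℝ) = -gg T r (fun e => -w e) r := by
      rw [hBsum, sum_inner, ← sum_sel T r hT (fun e => -w e) r]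
      rw [← Finset.sum_neg_distrib]
      exact Finset.sum_congr rfl fun x _ => by simp [hw]
    have hnormA : gg T r w r ≤ ‖A‖ := by
      rw [← hipA]
      calc (inner ℝ A (uvec θ₀) : ℝ) ≤ ‖A‖ * ‖uvec θ₀‖ := real_inner_le_norm _ _
      _ = ‖A‖ := by rw [uvec_norm, mul_one]
    have hnormB : gg T r (fun e => -w e) r ≤ ‖B‖ := by
      have : (inner ℝ B (uvec θ₀) : ℝ) ≥ -(‖B‖ * ‖uvec θ₀‖) := by
        have := neg_abs_le (inner ℝ B (uvec θ₀) : ℝ)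
        linarith [abs_real_inner_le_norm B (uvec θ₀)]
      rw [hipB] at this
      rw [uvec_norm, mul_one] at this
      linarith
    have hchain : 2 * (leaves.card : ℝ) / π ≤ ‖A‖ + ‖B‖ := by
      calc 2 * (leaves.card : ℝ) / π ≤ ∑ u ∈ leaves,
            |(inner ℝ ((f s(u, par T r u) : EuclideanSpace ℝ (Fin 2))) (uvec θ₀) : ℝ)| := hθ₀
      _ = ∑ u ∈ leaves, |w s(u, par T r u)| := by rw [hFw]
      _ ≤ gg T r w r + gg T r (fun e => -w e) r := hsum
      _ ≤ ‖A‖ + ‖B‖ := add_le_add hnormA hnormB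
    rcases le_total ‖A‖ ‖B‖ with hAB | hAB
    · refine ⟨Sm, hSmc, ?_⟩
      rw [← hB, hlcard, div_le_iff₀ hπ]
      rw [div_le_iff₀ hπ] at hchain
      nlinarith [hchain, hAB]
    · refine ⟨Sp, hSpc, ?_⟩
      rw [← hA, hlcard, div_le_iff₀ hπ]
      rw [div_le_iff₀ hπ] at hchain
      nlinarith [hchain, hAB]
  · push_neg at hbig
    have hl2 : (ℓ : ℝ) ≤ 2 := by
      have h1 : ℓ ≤ Fintype.card V := by
        rw [hℓ]
        calc ({v : V | T.degree v = 1} : Set V).ncard ≤ (Set.univ : Set V).ncard :=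
          Set.ncard_le_ncard (Set.subset_univ _) Set.finite_univ
        _ = Fintype.card V := by rw [Set.ncard_univ, Nat.card_eq_fintype_card]
      have h2 : Fintype.card V ≤ 2 := by
        have hedge := hT.card_edgeFinset
        have hdeg := T.sum_degrees_eq_twice_card_edges
        have hsum : ∑ v : V, T.degree v ≤ Fintype.card V := by
          calc ∑ v : V, T.degree v ≤ ∑ _v : V, 1 :=
            Finset.sum_le_sum (fun v _ => by have := hbig v; omega)
          _ = Fintype.card V := by simp
        have hpos : 1 ≤ Fintype.card V := Fintype.card_pos
        omega
      have hc1 : (ℓ:ℝ) ≤ (Fintype.card V : ℝ) := by exact_mod_cast h1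
      have hc2 : (Fintype.card V : ℝ) ≤ 2 := by exact_mod_cast h2
      linarith
    by_cases hedge : ∃ a b : V, T.Adj a b
    · obtain ⟨a, b, hab⟩ := hedge
      refine ⟨T.subgraphOfAdj hab, SimpleGraph.Subgraph.subgraphOfAdj_connected hab, ?_⟩
      rw [SimpleGraph.edgeSet_subgraphOfAdj, finsum_mem_singleton, hfe]
      rw [div_le_one hπ]
      linarith
    · push_neg at hedge
      obtain ⟨v⟩ := ‹Nonempty V›
      refine ⟨T.singletonSubgraph v, SimpleGraph.Subgraph.singletonSubgraph_connected, ?_⟩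
      rw [SimpleGraph.edgeSet_singletonSubgraph, finsum_mem_empty]
      have hl0 : ℓ = 0 := by
        rw [hℓ]
        rw [show ({v : V | T.degree v = 1} : Set V) = ∅ from ?_]
        · simp
        · ext u
          simp only [Set.mem_setOf_eq, Set.mem_empty_iff_false, iff_false]
          intro hdeg
          have : 0 < T.degree u := by omega
          rw [← SimpleGraph.card_neighborFinset_eq_degree, Finset.card_pos] at this
          obtain ⟨x, hx⟩ := this
          exact hedge u x (by rwa [SimpleGraph.mem_neighborFinset] at hx)
      rw [hl0]
      simp [norm_nonneg]
end

section
/- Fix an integer r ≥ 2. Define vectors d_ℓ ∈ ℕ^r for ℓ ≥ 2 as follows: (d₂)_j = r − ⌈(r+1−j)/2⌉ for j ∈ {1,…,r}; and for ℓ ≥ 3, d_ℓ is the increasing rearrangement of the vector α_{d_{ℓ-1}}, where for an increasing vector m, α_m is the vector with j-th coordinate m_j + r − j′ where j′ is the position of coordinate j under the sorting permutation (equivalently, since d_{ℓ-1} is increasing and 1-Lipschitz, (d_ℓ)_j = (d_{ℓ-1})_{r+1−j} + j − 1). Then for every ℓ ≥ 2, the maximum coordinate of d_ℓ equals ⌈ℓ(r−1)/2⌉.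 -/
lemma sup_add_const_aux {n : ℕ} (hn : 0 < n) (f : Fin n → ℕ) (c : ℕ) :
    Finset.univ.sup (fun j => f j + c) = Finset.univ.sup f + c := by
  haveI : Nonempty (Fin n) := ⟨⟨0, hn⟩⟩
  obtain ⟨j, _, hj⟩ := Finset.exists_mem_eq_sup Finset.univ Finset.univ_nonempty f
  apply le_antisymm
  · exact Finset.sup_le fun i _ =>
      Nat.add_le_add_right (Finset.le_sup (Finset.mem_univ i)) c
  · rw [hj]
    exact Finset.le_sup (f := fun j => f j + c) (Finset.mem_univ j)

/-- **Maximum coordinate of the profile vectors `d_ℓ`.**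
Fix `r ≥ 2` and let `D ℓ : Fin r → ℕ` (for `ℓ ≥ 2`) be the vectors defined by
`(d₂)_j = r − ⌈(r+1−j)/2⌉` for `j ∈ {1,…,r}` (here coordinate `j : Fin r` represents the
`(j+1)`-st entry, and `⌈(r−j)/2⌉ = (r − j + 1)/2` in natural division), together with the
recursion `(d_ℓ)_j = (d_{ℓ-1})_{r+1−j} + j − 1` for `ℓ ≥ 3` (in `Fin r` indexing,
`D ℓ j = D (ℓ-1) j.rev + j`), which is the increasing rearrangement of `α_{d_{ℓ-1}}`.
Then for every `ℓ ≥ 2` the maximum coordinate of `d_ℓ` equals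
`⌈ℓ(r−1)/2⌉ = (ℓ(r−1) + 1)/2` (natural division). -/
theorem profile_vector_max (r : ℕ) (hr : 2 ≤ r) (D : ℕ → Fin r → ℕ)
    (hbase : ∀ j : Fin r, D 2 j = r - (r - (j : ℕ) + 1) / 2)
    (hrec : ∀ ℓ : ℕ, 3 ≤ ℓ → ∀ j : Fin r, D ℓ j = D (ℓ - 1) j.rev + (j : ℕ)) :
    ∀ ℓ : ℕ, 2 ≤ ℓ → Finset.univ.sup (D ℓ) = (ℓ * (r - 1) + 1) / 2 := by
  intro ℓ hℓ
  induction ℓ using Nat.strong_induction_on with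
  | _ ℓ ih =>
    have jr : ∀ j : Fin r, (j : ℕ) < r := fun j => j.isLt
    have jlast : ((⟨r - 1, by omega⟩ : Fin r) : ℕ) = r - 1 := rfl
    rcases Nat.lt_or_ge ℓ 4 with h4 | h4
    · interval_cases ℓ
      · -- ℓ = 2
        apply le_antisymm
        · refine Finset.sup_le fun j _ => ?_
          rw [hbase]
          have := jr j
          omega
        · have h := Finset.le_sup (f := D 2) (Finset.mem_univ (⟨r - 1, by omega⟩ : Fin r))
          rw [hbase, jlast] at h
          have : r - (r - (r - 1) + 1) / 2 = (2 * (r - 1) + 1) / 2 := by omega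
          omega
      · -- ℓ = 3
        have h3 : ∀ j : Fin r, D 3 j = r - (r - (r - 1 - (j : ℕ)) + 1) / 2 + (j : ℕ) := by
          intro j
          rw [hrec 3 (by norm_num) j, show (3 : ℕ) - 1 = 2 from rfl, hbase, Fin.val_rev]
          have := jr j
          congr 2
          omega
        apply le_antisymm
        · refine Finset.sup_le fun j _ => ?_
          rw [h3]
          have := jr j
          omega
        · have h := Finset.le_sup (f := D 3) (Finset.mem_univ (⟨r - 1, by omega⟩ : Fin r))
          rw [h3, jlast] at h
          have : r - (r - (r - 1 - (r - 1)) + 1) / 2 + (r - 1) = (3 * (r - 1) + 1) / 2 := by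
            omega
          omega
    · -- ℓ ≥ 4
      have hD : ∀ j : Fin r, D ℓ j = D (ℓ - 2) j + (r - 1) := by
        intro j
        rw [hrec ℓ (by omega) j, hrec (ℓ - 1) (by omega) j.rev,
          show ℓ - 1 - 1 = ℓ - 2 from by omega, Fin.rev_rev, Fin.val_rev]
        have := jr j
        omega
      have hsup : Finset.univ.sup (D ℓ) = Finset.univ.sup (D (ℓ - 2)) + (r - 1) := by
        rw [show D ℓ = fun j => D (ℓ - 2) j + (r - 1) from funext hD]
        exact sup_add_const_aux (by omega) _ _
      rw [hsup, ih (ℓ - 2) (by omega) (by omega)]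
      have hm : ℓ * (r - 1) = (ℓ - 2) * (r - 1) + 2 * (r - 1) := by
        rw [← Nat.add_mul]
        congr 1
        omega
      omega
end
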